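/- arXiv:2212.07587 — 5 statements merged into one kernel-verified Lean document; each statement's English description precedes it below -/
import Mathlib

section
/- Let A be a real m×n matrix, let φ : ℝ^m → ℝ and φ̃ : ℝ^n → ℝ be differentiable ϱ-strongly convex functions (ϱ > 0), and let α > 0. Then for all p, q ∈ ℝ^m and all w, u ∈ ℝ^n: ⟨p − q, Aw − Au⟩ ≥ −(1/(αϱ)) B_φ(q, p) − (α‖AᵀA‖/ϱ) B_φ̃(w, u), where ‖AᵀA‖ is the spectral norm (largest eigenvalue) of AᵀA. -/
noncomputable section
open scoped RealInnerProductSpace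
open Filter

abbrev Euc (d : ℕ) : Type := EuclideanSpace ℝ (Fin d)

/-- Bregman distance associated with kernel `φ` whose gradient map is `φ'`. -/
def Breg {d : ℕ} (φ : Euc d → ℝ) (φ' : Euc d → Euc d) (x y : Euc d) : ℝ :=
  φ x - φ y - ⟪φ' y, x - y⟫

/-- First-order condition for a convex differentiable function. -/
lemma convex_grad_ineq {d : ℕ} {g : Euc d → ℝ} {g' : Euc d → Euc d}
    (hg : ∀ z, HasGradientAt g (g' z) z) (hc : ConvexOn ℝ Set.univ g) (x y : Euc d) :
    g y + ⟪g' y, x - y⟫ ≤ g x := by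
  set f : ℝ → ℝ := fun t => g (y + t • (x - y)) with hf
  have hderiv : ∀ t : ℝ, HasDerivAt f ⟪g' (y + t • (x - y)), x - y⟫ t := by
    intro t
    have hc' : HasDerivAt (fun t : ℝ => y + t • (x - y)) (x - y) t := by
      simpa using ((hasDerivAt_id t).smul_const (x - y)).const_add y
    have := (hg (y + t • (x - y))).hasFDerivAt.comp_hasDerivAt t hc'
    simp [InnerProductSpace.toDual_apply_apply] at this
    exact this
  have hconv : ConvexOn ℝ Set.univ f := by
    have := hc.comp_affineMap (AffineMap.lineMap y x)
    have heq : f = g ∘ (AffineMap.lineMap y x) := by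
      funext t
      simp [hf, AffineMap.lineMap_apply, add_comm]
    rw [heq]
    simpa using this
  have hslope := hconv.le_slope_of_hasDerivAt (Set.mem_univ 0) (Set.mem_univ 1)
    one_pos (hderiv 0)
  rw [slope_def_field] at hslope
  have h0 : f 0 = g y := by simp [hf]
  have h1 : f 1 = g x := by simp [hf]
  have hd0 : (y + (0:ℝ) • (x - y)) = y := by simp
  rw [hd0] at hslope
  rw [h0, h1] at hslope
  have : ⟪g' y, x - y⟫ ≤ g x - g y := by
    have := hslope
    simpa using this
  linarith

/-- Strong convexity lower bound on the Bregman distance. -/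
lemma breg_lower {d : ℕ} {g : Euc d → ℝ} {g' : Euc d → Euc d} {ϱ : ℝ}
    (hg : ∀ z, HasGradientAt g (g' z) z)
    (hc : ConvexOn ℝ Set.univ (fun z => g z - ϱ / 2 * ‖z‖ ^ 2)) (x y : Euc d) :
    ϱ / 2 * ‖x - y‖ ^ 2 ≤ Breg g g' x y := by
  set h : Euc d → ℝ := fun z => g z - ϱ / 2 * ‖z‖ ^ 2 with hh
  have hgrad : ∀ z, HasGradientAt h (g' z - ϱ • z) z := by
    intro z
    rw [hasGradientAt_iff_hasFDerivAt]
    have h1 : HasFDerivAt g (InnerProductSpace.toDual ℝ _ (g' z)) z :=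
      (hg z).hasFDerivAt
    have h2 : HasFDerivAt (fun w : Euc d => ‖w‖ ^ 2) (2 • (innerSL ℝ z)) z := by
      simpa using (hasFDerivAt_id z).norm_sq
    have h3 := h1.sub ((h2.const_mul (ϱ / 2)))
    convert h3 using 1
    · rfl
    · rfl
    · rfl
    ext w
    simp only [InnerProductSpace.toDual_apply_apply, ContinuousLinearMap.coe_sub', Pi.sub_apply,
      ContinuousLinearMap.coe_smul', Pi.smul_apply, innerSL_apply_apply, inner_sub_left,
      real_inner_smul_left, smul_eq_mul, two_smul, ContinuousLinearMap.add_apply]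
    ring
  have key := convex_grad_ineq hgrad hc x y
  rw [hh] at key
  simp only [inner_sub_left, real_inner_smul_left] at key
  have hexp : ‖x - y‖ ^ 2 = ‖x‖ ^ 2 - 2 * ⟪y, x - y⟫ - ‖y‖ ^ 2 := by
    rw [norm_sub_sq_real, inner_sub_right, real_inner_comm x y,
      real_inner_self_eq_norm_sq]
    ring
  simp only [Breg]
  rw [hexp]
  linarith [key]

set_option maxHeartbeats 1000000 in
/-- Cauchy–Schwarz/Young-type lower bound on the cross term via
Bregman distances of `ϱ`-strongly convex kernels. -/
theorem cross_term_bregman_bound {n m : ℕ} (A : Euc n →L[ℝ] Euc m)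
    (φ : Euc m → ℝ) (φ' : Euc m → Euc m)
    (φt : Euc n → ℝ) (φt' : Euc n → Euc n)
    (ϱ α : ℝ) (hϱ : 0 < ϱ) (hα : 0 < α)
    (hφg : ∀ z, HasGradientAt φ (φ' z) z)
    (hφsc : ConvexOn ℝ Set.univ (fun z => φ z - ϱ / 2 * ‖z‖ ^ 2))
    (hφtg : ∀ z, HasGradientAt φt (φt' z) z)
    (hφtsc : ConvexOn ℝ Set.univ (fun z => φt z - ϱ / 2 * ‖z‖ ^ 2)) :
    ∀ (p q : Euc m) (w u : Euc n),
      -(1 / (α * ϱ)) * Breg φ φ' q p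
          - α * ‖(ContinuousLinearMap.adjoint A).comp A‖ / ϱ * Breg φt φt' w u
        ≤ ⟪p - q, A w - A u⟫ := by
  intro p q w u
  set N := ‖(ContinuousLinearMap.adjoint A).comp A‖ with hN
  have hNnn : 0 ≤ N := norm_nonneg _
  set a := p - q with ha
  set b := A w - A u with hb
  have hB1 : ϱ / 2 * ‖a‖ ^ 2 ≤ Breg φ φ' q p := by
    have := breg_lower hφg hφsc q p
    have hnorm : ‖q - p‖ = ‖a‖ := by rw [ha, norm_sub_rev]
    rwa [hnorm] at this
  have hB2 : ϱ / 2 * ‖w - u‖ ^ 2 ≤ Breg φt φt' w u := breg_lower hφtg hφtsc w u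
  -- ‖b‖² ≤ N ‖w-u‖²
  have hbsq : ‖b‖ ^ 2 ≤ N * ‖w - u‖ ^ 2 := by
    have hbo : b = A (w - u) := by rw [hb, map_sub]
    have h1 : ‖b‖ ^ 2 = ⟪((ContinuousLinearMap.adjoint A).comp A) (w - u), w - u⟫ := by
      rw [hbo, ← real_inner_self_eq_norm_sq]
      rw [ContinuousLinearMap.comp_apply, ContinuousLinearMap.adjoint_inner_left]
    have h2 : ⟪((ContinuousLinearMap.adjoint A).comp A) (w - u), w - u⟫
        ≤ ‖((ContinuousLinearMap.adjoint A).comp A) (w - u)‖ * ‖w - u‖ :=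
      real_inner_le_norm _ _
    have h3 : ‖((ContinuousLinearMap.adjoint A).comp A) (w - u)‖ ≤ N * ‖w - u‖ :=
      ContinuousLinearMap.le_opNorm _ _
    have h4 : ‖((ContinuousLinearMap.adjoint A).comp A) (w - u)‖ * ‖w - u‖
        ≤ N * ‖w - u‖ * ‖w - u‖ := by
      apply mul_le_mul_of_nonneg_right h3 (norm_nonneg _)
    rw [h1]
    nlinarith [h2, h4]
  have hcs : -(‖a‖ * ‖b‖) ≤ ⟪a, b⟫ := by
    have h1 := abs_real_inner_le_norm a b
    have h2 := neg_abs_le (⟪a, b⟫)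
    linarith
  have hyoung : ‖a‖ * ‖b‖ ≤ 1 / (2 * α) * ‖a‖ ^ 2 + α / 2 * ‖b‖ ^ 2 := by
    have h2 : 2 * α * (‖a‖ * ‖b‖) ≤ ‖a‖ ^ 2 + α ^ 2 * ‖b‖ ^ 2 := by
      nlinarith [sq_nonneg (‖a‖ - α * ‖b‖)]
    calc ‖a‖ * ‖b‖ = 1 / (2 * α) * (2 * α * (‖a‖ * ‖b‖)) := by field_simp
      _ ≤ 1 / (2 * α) * (‖a‖ ^ 2 + α ^ 2 * ‖b‖ ^ 2) := by
          apply mul_le_mul_of_nonneg_left h2 (by positivity)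
      _ = 1 / (2 * α) * ‖a‖ ^ 2 + α / 2 * ‖b‖ ^ 2 := by field_simp
  have step1 : -(1 / (α * ϱ)) * Breg φ φ' q p ≤ -(1 / (2 * α)) * ‖a‖ ^ 2 := by
    have hpos : 0 < 1 / (α * ϱ) := by positivity
    have := mul_le_mul_of_nonneg_left hB1 hpos.le
    have heq : 1 / (α * ϱ) * (ϱ / 2 * ‖a‖ ^ 2) = 1 / (2 * α) * ‖a‖ ^ 2 := by
      field_simp
    nlinarith [this]
  have step2 : -(α * N / ϱ) * Breg φt φt' w u ≤ -(α / 2) * ‖b‖ ^ 2 := by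
    have hpos : 0 ≤ α * N / ϱ := by positivity
    have h5 := mul_le_mul_of_nonneg_left hB2 hpos
    have heq : α * N / ϱ * (ϱ / 2 * ‖w - u‖ ^ 2) = α / 2 * (N * ‖w - u‖ ^ 2) := by
      field_simp
    have h6 : α / 2 * ‖b‖ ^ 2 ≤ α / 2 * (N * ‖w - u‖ ^ 2) :=
      mul_le_mul_of_nonneg_left hbsq (by positivity)
    nlinarith [h5, h6]
  calc -(1 / (α * ϱ)) * Breg φ φ' q p - α * N / ϱ * Breg φt φt' w u
      ≤ -(1 / (2 * α)) * ‖a‖ ^ 2 + -(α / 2) * ‖b‖ ^ 2 := by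
        have : - (α * N / ϱ * Breg φt φt' w u) = -(α * N / ϱ) * Breg φt φt' w u := by ring
        linarith [step1, step2]
    _ ≤ -(‖a‖ * ‖b‖) := by linarith [hyoung]
    _ ≤ ⟪a, b⟫ := hcs
end
end

section
/- Let (x^{k+1}, ỹ^{k+1}, y^{k+1}) be produced by one SPIDA iteration from (x^k, y^k), with ψ differentiable and convex. Then for every x ∈ X: L(x^{k+1}, ỹ^{k+1}) − L(x, ỹ^{k+1}) ≤ μ B_ψ(x, x^k) − μ B_ψ(x, x^{k+1}) − μ B_ψ(x^{k+1}, x^k). -/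
noncomputable section
open scoped RealInnerProductSpace
open Filter

/-- The convex-concave Lagrangian `L(x,y) = f(x) + ⟨Ax, y⟩ − g(y)`. -/
def Lag {n m : ℕ} (f : Euc n → ℝ) (g : Euc m → ℝ) (A : Euc n →L[ℝ] Euc m)
    (x : Euc n) (y : Euc m) : ℝ := f x + ⟪A x, y⟫ - g y

/-- descent inequality for the primal part of one SPIDA iteration. -/
theorem spida_primal_descent {n m : ℕ}
    (X : Set (Euc n)) (Y : Set (Euc m))
    (hXne : X.Nonempty) (hXcl : IsClosed X) (hXcv : Convex ℝ X)
    (hYne : Y.Nonempty) (hYcl : IsClosed Y) (hYcv : Convex ℝ Y)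
    (f : Euc n → ℝ) (g : Euc m → ℝ)
    (hf : ConvexOn ℝ Set.univ f) (hflsc : LowerSemicontinuous f)
    (hg : ConvexOn ℝ Set.univ g) (hglsc : LowerSemicontinuous g)
    (A : Euc n →L[ℝ] Euc m)
    (γ μ : ℝ) (hγ : 0 < γ) (hμ : 0 < μ)
    (φ : Euc m → ℝ) (φ' : Euc m → Euc m)
    (hφg : ∀ z, HasGradientAt φ (φ' z) z) (hφcv : ConvexOn ℝ Set.univ φ)
    (ψ : Euc n → ℝ) (ψ' : Euc n → Euc n)
    (hψg : ∀ z, HasGradientAt ψ (ψ' z) z) (hψcv : ConvexOn ℝ Set.univ ψ)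
    (xk x1 : Euc n) (yk yt1 y1 : Euc m)
    (hxk : xk ∈ X) (hyk : yk ∈ Y)
    (hyt1mem : yt1 ∈ Y)
    (hyt1max : ∀ y ∈ Y, -g y + ⟪A xk, y⟫ - γ * Breg φ φ' y yk ≤
      -g yt1 + ⟪A xk, yt1⟫ - γ * Breg φ φ' yt1 yk)
    (hx1mem : x1 ∈ X)
    (hx1min : ∀ x ∈ X, f x1 + ⟪A x1, yt1⟫ + μ * Breg ψ ψ' x1 xk ≤
      f x + ⟪A x, yt1⟫ + μ * Breg ψ ψ' x xk)
    (hy1mem : y1 ∈ Y)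
    (hy1max : ∀ y ∈ Y, -g y + ⟪A x1, y⟫ - γ * Breg φ φ' y yk ≤
      -g y1 + ⟪A x1, y1⟫ - γ * Breg φ φ' y1 yk)
    :
    ∀ x ∈ X,
      Lag f g A x1 yt1 - Lag f g A x yt1 ≤
        μ * Breg ψ ψ' x xk - μ * Breg ψ ψ' x x1 - μ * Breg ψ ψ' x1 xk := by
  intro x hx
  set d : Euc n := x - x1 with hd
  set c : ℝ := f x1 + ⟪A x1, yt1⟫ - f x - ⟪A x, yt1⟫ + μ * ⟪ψ' xk, d⟫ with hc
  -- Step 1: for all small t > 0, t * c ≤ μ * (ψ (x1 + t • d) - ψ x1)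
  have key : ∀ t : ℝ, 0 < t → t ≤ 1 →
      t * c ≤ μ * (ψ (x1 + t • d) - ψ x1) := by
    intro t ht0 ht1
    have hmem : x1 + t • d ∈ X := by
      have h := hXcv hx1mem hx (by linarith : (0:ℝ) ≤ 1 - t) (le_of_lt ht0)
        (by ring)
      have he : x1 + t • d = (1 - t) • x1 + t • x := by rw [hd]; module
      rwa [he]
    have hF := hx1min _ hmem
    have hfcv : f (x1 + t • d) ≤ (1 - t) * f x1 + t * f x := by
      have he : x1 + t • d = (1 - t) • x1 + t • x := by rw [hd]; module
      rw [he]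
      exact hf.2 (Set.mem_univ x1) (Set.mem_univ x) (by linarith) (le_of_lt ht0)
        (by ring)
    have hA : ⟪A (x1 + t • d), yt1⟫ = ⟪A x1, yt1⟫ + t * (⟪A x, yt1⟫ - ⟪A x1, yt1⟫) := by
      simp only [hd, map_add, map_smul, map_sub, inner_add_left, inner_sub_left,
        real_inner_smul_left]
    have hP : ⟪ψ' xk, (x1 + t • d) - xk⟫ = ⟪ψ' xk, x1 - xk⟫ + t * ⟪ψ' xk, d⟫ := by
      have : (x1 + t • d) - xk = (x1 - xk) + t • d := by abel
      rw [this, inner_add_right, real_inner_smul_right]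
    simp only [Breg] at hF
    rw [hA, hP] at hF
    nlinarith [hF, hfcv]
  -- Step 2: derivative of ψ along the segment
  have hline : HasDerivAt (fun t : ℝ => ψ (x1 + t • d)) ⟪ψ' x1, d⟫ 0 := by
    have h1 : HasDerivAt (fun t : ℝ => x1 + t • d) d 0 := by
      simpa using ((hasDerivAt_id (0:ℝ)).smul_const d).const_add x1
    have h0 : x1 + (0:ℝ) • d = x1 := by simp
    have h2 : HasFDerivAt ψ
        (LinearMap.toContinuousLinearMap
          ((InnerProductSpace.toDual ℝ (Euc n)) (ψ' x1)).toLinearMap)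
        (x1 + (0:ℝ) • d) := by rw [h0]; exact (hψg x1).hasFDerivAt
    have h3 := h2.comp_hasDerivAt (0:ℝ) h1
    simp [InnerProductSpace.toDual_apply_apply] at h3
    exact h3
  have hslope : Tendsto (fun t : ℝ => μ * ((ψ (x1 + t • d) - ψ x1) / t))
      (nhdsWithin 0 (Set.Ioi 0)) (nhds (μ * ⟪ψ' x1, d⟫)) := by
    have h0 := hasDerivAt_iff_tendsto_slope.mp hline
    have h1 : Tendsto (slope (fun t : ℝ => ψ (x1 + t • d)) 0)
        (nhdsWithin 0 (Set.Ioi 0)) (nhds ⟪ψ' x1, d⟫) :=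
      h0.mono_left (nhdsWithin_mono _ (fun t ht => ne_of_gt ht))
    have h2 := h1.const_mul μ
    refine h2.congr (fun t => ?_)
    simp [slope_def_field, div_eq_inv_mul]
  -- Step 3: pass to the limit
  have hcle : c ≤ μ * ⟪ψ' x1, d⟫ := by
    have hev : ∀ᶠ t in nhdsWithin (0:ℝ) (Set.Ioi 0),
        c ≤ μ * ((ψ (x1 + t • d) - ψ x1) / t) := by
      filter_upwards [Ioc_mem_nhdsGT_of_mem (Set.left_mem_Ico.mpr one_pos)] with t ht
      have h := key t ht.1 ht.2
      rw [mul_div_assoc'] at *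
      rw [le_div_iff₀ ht.1]
      linarith [h]
    exact ge_of_tendsto hslope hev
  -- Step 4: conclude
  simp only [Lag, Breg, hc, hd, inner_sub_right] at hcle ⊢
  nlinarith [hcle]
end
end

section
/- Under the standing assumption, let (x^{k+1}, ỹ^{k+1}, y^{k+1}) be produced by one SPIDA iteration from (x^k, y^k). Then for every x ∈ X and y ∈ Y: L(x^{k+1}, y) − L(x, ỹ^{k+1}) ≤ γ B_φ(y, y^k) − γ B_φ(y, y^{k+1}) + μ B_ψ(x, x^k) − μ B_ψ(x, x^{k+1}). -/
noncomputable section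
open scoped RealInnerProductSpace
open Filter Set Topology

/-- slope of φ along a ray tends to the gradient pairing -/
lemma slope_grad {d : ℕ} {φ : Euc d → ℝ} {G y : Euc d} (h : HasGradientAt φ G y) (v : Euc d) :
    Tendsto (fun t : ℝ => (φ (y + t • v) - φ y) / t) (𝓝[>] (0:ℝ)) (𝓝 ⟪G, v⟫) := by
  have hline : HasDerivAt (fun t : ℝ => y + t • v) v (0:ℝ) := by
    simpa using ((hasDerivAt_id (0:ℝ)).smul_const v).const_add y
  have hF : HasFDerivAt φ ((InnerProductSpace.toDual ℝ (Euc d)) G) y :=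
    hasGradientAt_iff_hasFDerivAt.mp h
  have hF' : HasFDerivAt φ ((InnerProductSpace.toDual ℝ (Euc d)) G)
      ((fun t : ℝ => y + t • v) 0) := by simpa using hF
  have hcomp : HasDerivAt (fun t : ℝ => φ (y + t • v)) ⟪G, v⟫ (0:ℝ) := by
    have := hF'.comp_hasDerivAt (0:ℝ) hline
    simpa [Function.comp_def, InnerProductSpace.toDual_apply_apply] using this
  have := hasDerivAt_iff_tendsto_slope.mp hcomp
  have h2 : Tendsto (slope (fun t : ℝ => φ (y + t • v)) 0) (𝓝[>] (0:ℝ)) (𝓝 ⟪G, v⟫) :=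
    this.mono_left (nhdsWithin_mono _ (fun t ht => ne_of_gt ht))
  refine h2.congr (fun t => ?_)
  simp [slope_def_field]

/-- limit for the squared-norm slope -/
lemma slope_normsq {d : ℕ} (c : ℝ) (y v : Euc d) :
    Tendsto (fun t : ℝ => (c * ‖y + t • v‖ ^ 2 - c * ‖y‖ ^ 2) / t) (𝓝[>] (0:ℝ))
      (𝓝 (2 * c * ⟪y, v⟫)) := by
  have hcont : Tendsto (fun t : ℝ => 2 * c * ⟪y, v⟫ + c * ‖v‖ ^ 2 * t) (𝓝[>] (0:ℝ))
      (𝓝 (2 * c * ⟪y, v⟫)) := by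
    have hc : Continuous fun t : ℝ => 2 * c * ⟪y, v⟫ + c * ‖v‖ ^ 2 * t := by continuity
    have := hc.tendsto (0:ℝ)
    simp only [mul_zero, add_zero] at this
    exact this.mono_left nhdsWithin_le_nhds
  refine hcont.congr' ?_
  filter_upwards [self_mem_nhdsWithin] with t (ht : 0 < t)
  have hexp : ‖y + t • v‖ ^ 2 = ‖y‖ ^ 2 + 2 * (t * ⟪y, v⟫) + t ^ 2 * ‖v‖ ^ 2 := by
    rw [norm_add_sq_real, real_inner_smul_right, norm_smul]
    rw [mul_pow]
    simp [abs_of_pos ht]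
  rw [hexp]
  field_simp
  ring

/-- first-order lower bound from convexity along a segment, given the directional slope limit -/
lemma gradIneq' {d : ℕ} {χ : Euc d → ℝ} (hcv : ConvexOn ℝ Set.univ χ) {c : ℝ} (x y : Euc d)
    (hlim : Tendsto (fun t : ℝ => (χ (y + t • (x - y)) - χ y) / t) (𝓝[>] (0:ℝ)) (𝓝 c)) :
    c ≤ χ x - χ y := by
  refine le_of_tendsto hlim ?_
  filter_upwards [Ioc_mem_nhdsGT_of_mem (by simp : (0:ℝ) ∈ Ico (0:ℝ) 1)] with t ht
  have hcomb : y + t • (x - y) = (1 - t) • y + t • x := by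
    rw [smul_sub, sub_smul, one_smul]; abel
  have hcx := hcv.2 (Set.mem_univ y) (Set.mem_univ x) (by linarith [ht.2] : (0:ℝ) ≤ 1 - t)
    ht.1.le (by ring)
  rw [← hcomb] at hcx
  simp only [smul_eq_mul] at hcx
  rw [div_le_iff₀ ht.1]
  nlinarith [hcx]

/-- gradient inequality for a convex differentiable function -/
lemma grad_lower {d : ℕ} {φ : Euc d → ℝ} {φ' : Euc d → Euc d}
    (hφg : ∀ z, HasGradientAt φ (φ' z) z) (hcv : ConvexOn ℝ Set.univ φ) (x y : Euc d) :
    ⟪φ' y, x - y⟫ ≤ φ x - φ y :=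
  gradIneq' hcv x y (slope_grad (hφg y) (x - y))

/-- strong convexity lower bound on the Bregman distance -/
lemma strong_lower {d : ℕ} {φ : Euc d → ℝ} {φ' : Euc d → Euc d} {ϱ : ℝ}
    (hφg : ∀ z, HasGradientAt φ (φ' z) z)
    (hsc : ConvexOn ℝ Set.univ (fun z => φ z - ϱ / 2 * ‖z‖ ^ 2)) (x y : Euc d) :
    ϱ / 2 * ‖x - y‖ ^ 2 ≤ Breg φ φ' x y := by
  have hlim : Tendsto (fun t : ℝ =>
      ((fun z => φ z - ϱ / 2 * ‖z‖ ^ 2) (y + t • (x - y)) - (fun z => φ z - ϱ / 2 * ‖z‖ ^ 2) y) / t)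
      (𝓝[>] (0:ℝ)) (𝓝 (⟪φ' y, x - y⟫ - 2 * (ϱ / 2) * ⟪y, x - y⟫)) := by
    have h1 := slope_grad (hφg y) (x - y)
    have h2 := slope_normsq (ϱ / 2) y (x - y)
    have := h1.sub h2
    refine this.congr (fun t => ?_)
    ring
  have hkey := gradIneq' hsc x y hlim
  have e1 : ⟪y, x - y⟫ = ⟪x, y⟫ - ‖y‖ ^ 2 := by
    rw [inner_sub_right, real_inner_comm, real_inner_self_eq_norm_sq]
  have e2 : ‖x - y‖ ^ 2 = ‖x‖ ^ 2 - 2 * ⟪x, y⟫ + ‖y‖ ^ 2 := norm_sub_sq_real x y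
  rw [e1] at hkey
  simp only [Breg]
  rw [e2]
  nlinarith [hkey]

/-- Breg comparison from convexity of `L0 • ψ − φn` -/
lemma diff_lower {d : ℕ} {ψ φn : Euc d → ℝ} {ψ' φn' : Euc d → Euc d} {L0 : ℝ}
    (hψg : ∀ z, HasGradientAt ψ (ψ' z) z) (hφng : ∀ z, HasGradientAt φn (φn' z) z)
    (hcv : ConvexOn ℝ Set.univ (fun z => L0 * ψ z - φn z)) (x y : Euc d) :
    Breg φn φn' x y ≤ L0 * Breg ψ ψ' x y := by
  have hlim : Tendsto (fun t : ℝ =>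
      ((fun z => L0 * ψ z - φn z) (y + t • (x - y)) - (fun z => L0 * ψ z - φn z) y) / t)
      (𝓝[>] (0:ℝ)) (𝓝 (L0 * ⟪ψ' y, x - y⟫ - ⟪φn' y, x - y⟫)) := by
    have h1 := (slope_grad (hψg y) (x - y)).const_mul L0
    have h2 := slope_grad (hφng y) (x - y)
    refine (h1.sub h2).congr (fun t => ?_)
    ring
  have hkey := gradIneq' hcv x y hlim
  simp only [Breg]
  nlinarith [hkey]

/-- three-point inequality for the Bregman prox step (maximization form) -/
lemma prox_ineq {d : ℕ} {C : Set (Euc d)} (hC : Convex ℝ C)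
    {h : Euc d → ℝ} (hh : ConvexOn ℝ Set.univ h)
    (b : Euc d) {γ : ℝ} (hγ : 0 < γ)
    {φ : Euc d → ℝ} {φ' : Euc d → Euc d} (hφg : ∀ z, HasGradientAt φ (φ' z) z)
    {yk z : Euc d} (hz : z ∈ C)
    (hmax : ∀ y ∈ C, -h y + ⟪b, y⟫ - γ * Breg φ φ' y yk ≤
      -h z + ⟪b, z⟫ - γ * Breg φ φ' z yk) :
    ∀ y ∈ C, -h y + ⟪b, y⟫ - γ * Breg φ φ' y yk ≤
      -h z + ⟪b, z⟫ - γ * Breg φ φ' z yk - γ * Breg φ φ' y z := by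
  intro y hy
  have key : h z - h y + ⟪b, y - z⟫ + γ * ⟪φ' yk, y - z⟫ ≤ γ * ⟪φ' z, y - z⟫ := by
    refine ge_of_tendsto ((slope_grad (hφg z) (y - z)).const_mul γ) ?_
    filter_upwards [Ioc_mem_nhdsGT_of_mem (by simp : (0:ℝ) ∈ Ico (0:ℝ) 1)] with t ht
    have hcomb : z + t • (y - z) = (1 - t) • z + t • y := by
      rw [smul_sub, sub_smul, one_smul]; abel
    have hytC : z + t • (y - z) ∈ C := by
      rw [hcomb]
      exact hC hz hy (by linarith [ht.2]) ht.1.le (by ring)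
    have M := hmax _ hytC
    have hconv : h (z + t • (y - z)) ≤ (1 - t) * h z + t * h y := by
      rw [hcomb]
      have := hh.2 (Set.mem_univ z) (Set.mem_univ y) (by linarith [ht.2] : (0:ℝ) ≤ 1 - t)
        ht.1.le (by ring)
      simpa [smul_eq_mul] using this
    have e1 : ⟪b, z + t • (y - z)⟫ = ⟪b, z⟫ + t * ⟪b, y - z⟫ := by
      rw [inner_add_right, real_inner_smul_right]
    have e2 : ⟪φ' yk, z + t • (y - z) - yk⟫ = ⟪φ' yk, z - yk⟫ + t * ⟪φ' yk, y - z⟫ := by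
      rw [show z + t • (y - z) - yk = (z - yk) + t • (y - z) by abel, inner_add_right,
        real_inner_smul_right]
    simp only [Breg] at M
    rw [e1, e2] at M
    rw [← mul_div_assoc, le_div_iff₀ ht.1]
    nlinarith [M, hconv]
  have i1 : ⟪b, y - z⟫ = ⟪b, y⟫ - ⟪b, z⟫ := inner_sub_right b y z
  have i2 : ⟪φ' yk, y - yk⟫ = ⟪φ' yk, z - yk⟫ + ⟪φ' yk, y - z⟫ := by
    rw [← inner_add_right]
    congr 1
    abel
  rw [i1] at key
  simp only [Breg]
  rw [i2]
  nlinarith [key]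

set_option maxHeartbeats 2000000
/-- combined one-iteration inequality of SPIDA under the standing
assumption. -/
theorem spida_combined_descent {n m : ℕ}
    (X : Set (Euc n)) (Y : Set (Euc m))
    (hXne : X.Nonempty) (hXcl : IsClosed X) (hXcv : Convex ℝ X)
    (hYne : Y.Nonempty) (hYcl : IsClosed Y) (hYcv : Convex ℝ Y)
    (f : Euc n → ℝ) (g : Euc m → ℝ)
    (hf : ConvexOn ℝ Set.univ f) (hflsc : LowerSemicontinuous f)
    (hg : ConvexOn ℝ Set.univ g) (hglsc : LowerSemicontinuous g)
    (A : Euc n →L[ℝ] Euc m)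
    (γ μ : ℝ) (hγ : 0 < γ) (hμ : 0 < μ)
    (φ : Euc m → ℝ) (φ' : Euc m → Euc m)
    (hφg : ∀ z, HasGradientAt φ (φ' z) z) (hφcv : ConvexOn ℝ Set.univ φ)
    (ψ : Euc n → ℝ) (ψ' : Euc n → Euc n)
    (hψg : ∀ z, HasGradientAt ψ (ψ' z) z) (hψcv : ConvexOn ℝ Set.univ ψ)
    (xk x1 : Euc n) (yk yt1 y1 : Euc m)
    (hxk : xk ∈ X) (hyk : yk ∈ Y)
    (hyt1mem : yt1 ∈ Y)
    (hyt1max : ∀ y ∈ Y, -g y + ⟪A xk, y⟫ - γ * Breg φ φ' y yk ≤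
      -g yt1 + ⟪A xk, yt1⟫ - γ * Breg φ φ' yt1 yk)
    (hx1mem : x1 ∈ X)
    (hx1min : ∀ x ∈ X, f x1 + ⟪A x1, yt1⟫ + μ * Breg ψ ψ' x1 xk ≤
      f x + ⟪A x, yt1⟫ + μ * Breg ψ ψ' x xk)
    (hy1mem : y1 ∈ Y)
    (hy1max : ∀ y ∈ Y, -g y + ⟪A x1, y⟫ - γ * Breg φ φ' y yk ≤
      -g y1 + ⟪A x1, y1⟫ - γ * Breg φ φ' y1 yk)
    (ϱ α : ℝ) (hϱ : 0 < ϱ) (hα : 0 < α)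
    (hφsc : ConvexOn ℝ Set.univ (fun z => φ z - ϱ / 2 * ‖z‖ ^ 2))
    (hαϱγ : 1 ≤ α * ϱ * γ)
    (φn : Euc n → ℝ) (φn' : Euc n → Euc n)
    (hφng : ∀ z, HasGradientAt φn (φn' z) z)
    (hφnsc : ConvexOn ℝ Set.univ (fun z => φn z - ϱ / 2 * ‖z‖ ^ 2))
    (L0 : ℝ) (hL0pos : 0 < L0)
    (hL0le : L0 ≤ ϱ * μ / (α * ‖(ContinuousLinearMap.adjoint A).comp A‖))
    (hLψφ : ConvexOn ℝ Set.univ (fun z => L0 * ψ z - φn z))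
    :
    ∀ x ∈ X, ∀ y ∈ Y,
      Lag f g A x1 y - Lag f g A x yt1 ≤
        γ * Breg φ φ' y yk - γ * Breg φ φ' y y1
          + μ * Breg ψ ψ' x xk - μ * Breg ψ ψ' x x1     := by
  intro x hx y hy
  -- the x-update as a Bregman prox maximization
  set b : Euc n := -((ContinuousLinearMap.adjoint A) yt1) with hb
  have hbip : ∀ u : Euc n, ⟪b, u⟫ = -⟪A u, yt1⟫ := by
    intro u
    rw [hb, inner_neg_left, ContinuousLinearMap.adjoint_inner_left, real_inner_comm]
  have hmaxX : ∀ x' ∈ X, -f x' + ⟪b, x'⟫ - μ * Breg ψ ψ' x' xk ≤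
      -f x1 + ⟪b, x1⟫ - μ * Breg ψ ψ' x1 xk := by
    intro x' hx'
    have := hx1min x' hx'
    rw [hbip x', hbip x1]
    linarith
  have T2 := prox_ineq hXcv hf b hμ hψg hx1mem hmaxX x hx
  rw [hbip x, hbip x1] at T2
  have T1 := prox_ineq hYcv hg (A x1) hγ hφg hy1mem hy1max y hy
  have T3 := prox_ineq hYcv hg (A xk) hγ hφg hyt1mem hyt1max y1 hy1mem
  -- norm facts
  have hAA : ‖(ContinuousLinearMap.adjoint A).comp A‖ = ‖A‖ * ‖A‖ :=
    ContinuousLinearMap.norm_adjoint_comp_self A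
  have hNpos : 0 < ‖A‖ := by
    rcases lt_or_eq_of_le (norm_nonneg A) with h | h
    · exact h
    · exfalso
      rw [hAA, ← h, mul_zero, mul_zero, div_zero] at hL0le
      linarith
  have hkey1 : L0 * (α * (‖A‖ * ‖A‖)) ≤ ϱ * μ := by
    rw [hAA] at hL0le
    exact (le_div_iff₀ (by positivity)).mp hL0le
  have hbound : ‖A‖ * ‖A‖ * L0 ≤ μ * γ * ϱ * ϱ := by
    nlinarith [mul_nonneg (mul_nonneg (mul_nonneg (norm_nonneg A) (norm_nonneg A)) hL0pos.le)
        (sub_nonneg.mpr hαϱγ),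
      mul_nonneg (mul_nonneg hϱ.le hγ.le) (sub_nonneg.mpr hkey1)]
  -- strong convexity bounds
  have S0 : 0 ≤ Breg φ φ' yt1 yk := by
    have := grad_lower hφg hφcv yt1 yk
    simp only [Breg]
    linarith
  have S1 : ϱ / 2 * ‖y1 - yt1‖ ^ 2 ≤ Breg φ φ' y1 yt1 := strong_lower hφg hφsc y1 yt1
  have S2a : ϱ / 2 * ‖x1 - xk‖ ^ 2 ≤ Breg φn φn' x1 xk := strong_lower hφng hφnsc x1 xk
  have S2b : Breg φn φn' x1 xk ≤ L0 * Breg ψ ψ' x1 xk := diff_lower hψg hφng hLψφ x1 xk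
  -- key cross-term estimate
  have hip : ⟪A x1, y1⟫ - ⟪A x1, yt1⟫ - ⟪A xk, y1⟫ + ⟪A xk, yt1⟫ = ⟪A (x1 - xk), y1 - yt1⟫ := by
    rw [map_sub, inner_sub_left, inner_sub_right, inner_sub_right]
    ring
  have hcs : ⟪A (x1 - xk), y1 - yt1⟫ ≤ ‖A‖ * ‖x1 - xk‖ * ‖y1 - yt1‖ := by
    calc ⟪A (x1 - xk), y1 - yt1⟫ ≤ ‖A (x1 - xk)‖ * ‖y1 - yt1‖ := real_inner_le_norm _ _
    _ ≤ ‖A‖ * ‖x1 - xk‖ * ‖y1 - yt1‖ :=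
      mul_le_mul_of_nonneg_right (A.le_opNorm _) (norm_nonneg _)
  have young : 2 * L0 * (‖A‖ * ‖x1 - xk‖ * ‖y1 - yt1‖) ≤
      μ * ϱ * ‖x1 - xk‖ ^ 2 + L0 * γ * ϱ * ‖y1 - yt1‖ ^ 2 := by
    nlinarith [sq_nonneg (μ * ϱ * ‖x1 - xk‖ - L0 * ‖A‖ * ‖y1 - yt1‖),
      mul_nonneg (mul_nonneg hL0pos.le (sq_nonneg ‖y1 - yt1‖)) (sub_nonneg.mpr hbound),
      mul_pos hμ hϱ]
  have c1 : μ * ϱ * ‖x1 - xk‖ ^ 2 ≤ 2 * L0 * (μ * Breg ψ ψ' x1 xk) := by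
    have := mul_le_mul_of_nonneg_left (S2a.trans S2b) (by positivity : (0:ℝ) ≤ 2 * μ)
    nlinarith [this]
  have c2 : L0 * γ * ϱ * ‖y1 - yt1‖ ^ 2 ≤ 2 * L0 * (γ * Breg φ φ' y1 yt1) := by
    have := mul_le_mul_of_nonneg_left S1 (by positivity : (0:ℝ) ≤ 2 * L0 * γ)
    nlinarith [this]
  have hNab : ‖A‖ * ‖x1 - xk‖ * ‖y1 - yt1‖ ≤
      μ * Breg ψ ψ' x1 xk + γ * Breg φ φ' y1 yt1 := by
    have h2 : 2 * L0 * (‖A‖ * ‖x1 - xk‖ * ‖y1 - yt1‖) ≤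
        2 * L0 * (μ * Breg ψ ψ' x1 xk + γ * Breg φ φ' y1 yt1) := by nlinarith [young, c1, c2]
    exact le_of_mul_le_mul_left h2 (by positivity)
  have hK : ⟪A x1, y1⟫ - ⟪A x1, yt1⟫ - ⟪A xk, y1⟫ + ⟪A xk, yt1⟫ ≤
      μ * Breg ψ ψ' x1 xk + γ * Breg φ φ' y1 yt1 + γ * Breg φ φ' yt1 yk := by
    rw [hip]
    nlinarith [hcs, hNab, mul_nonneg hγ.le S0]
  simp only [Lag]
  linarith [T1, T2, T3, hK]
end
end

section
/- (Ergodic O(1/N) rate.) Under the standing assumption, let (x^{k+1}, ỹ^{k+1}, y^{k+1}), k = 0, 1, 2, …, be the sequence generated by SPIDA from (x^0, y^0) ∈ X × Y. For a positive integer N define the ergodic averages x̂^N = (1/N) Σ_{k=1}^{N} x^k and ŷ^N = (1/N) Σ_{k=1}^{N} ỹ^k. Then for every x ∈ X and y ∈ Y: L(x̂^N, y) − L(x, ŷ^N) ≤ (1/N)(γ B_φ(y, y^0) + μ B_ψ(x, x^0)). -/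
noncomputable section
open scoped RealInnerProductSpace
open Filter

lemma dir_tendsto {d : ℕ} {φ : Euc d → ℝ} {g p : Euc d} (h : HasGradientAt φ g p) (v : Euc d) :
    Tendsto (fun t : ℝ => (φ (p + t • v) - φ p) / t) (nhdsWithin 0 (Set.Ioi 0)) (nhds ⟪g, v⟫) := by
  have hline : HasDerivAt (fun t : ℝ => p + t • v) v 0 := by
    simpa using ((hasDerivAt_id (0:ℝ)).smul_const v).const_add p
  have hcomp : HasDerivAt (fun t : ℝ => φ (p + t • v)) ⟪g, v⟫ 0 := by
    have hp : HasFDerivAt φ ((InnerProductSpace.toDual ℝ (Euc d)) g) (p + (0:ℝ) • v) := by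
      simpa using h.hasFDerivAt
    have h2 := hp.comp_hasDerivAt 0 hline
    have h3 : HasDerivAt (fun t : ℝ => φ (p + t • v)) ((InnerProductSpace.toDual ℝ (Euc d)) g v) 0 := h2
    simpa using h3
  have h1 := hasDerivAt_iff_tendsto_slope.mp hcomp
  have h2 : (nhdsWithin (0:ℝ) (Set.Ioi 0)) ≤ nhdsWithin 0 {(0:ℝ)}ᶜ :=
    nhdsWithin_mono _ (fun t ht => ne_of_gt ht)
  refine (h1.mono_left h2).congr (fun t => ?_)
  simp [slope_def_field]

lemma grad_ineq {d : ℕ} {φ : Euc d → ℝ} {φ' : Euc d → Euc d}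
    (hcv : ConvexOn ℝ Set.univ φ) (hg : ∀ z, HasGradientAt φ (φ' z) z)
    (u v : Euc d) : φ v + ⟪φ' v, u - v⟫ ≤ φ u := by
  have hlim := dir_tendsto (hg v) (u - v)
  have hev : ∀ᶠ t in nhdsWithin (0:ℝ) (Set.Ioi 0),
      (φ (v + t • (u - v)) - φ v) / t ≤ φ u - φ v := by
    filter_upwards [Ioc_mem_nhdsGT (one_pos : (0:ℝ) < 1)] with t ht
    have h1 : v + t • (u - v) = (1 - t) • v + t • u := by
      rw [sub_smul, one_smul, smul_sub]; abel
    have h2 := hcv.2 (Set.mem_univ v) (Set.mem_univ u)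
      (by linarith [ht.2] : (0:ℝ) ≤ 1 - t) (le_of_lt ht.1) (by ring)
    simp only [smul_eq_mul] at h2
    rw [h1, div_le_iff₀ ht.1]
    calc φ ((1 - t) • v + t • u) - φ v ≤ (1 - t) * φ v + t * φ u - φ v := by linarith
      _ = (φ u - φ v) * t := by ring
  have := le_of_tendsto hlim hev
  linarith

lemma breg_nonneg {d : ℕ} {φ : Euc d → ℝ} {φ' : Euc d → Euc d}
    (hcv : ConvexOn ℝ Set.univ φ) (hg : ∀ z, HasGradientAt φ (φ' z) z)
    (u v : Euc d) : 0 ≤ Breg φ φ' u v := by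
  have := grad_ineq hcv hg u v
  simp only [Breg]; linarith

lemma prox_step {d : ℕ} {C : Set (Euc d)} (hC : Convex ℝ C)
    {h : Euc d → ℝ} (hh : ConvexOn ℝ Set.univ h)
    {ψ : Euc d → ℝ} {ψ' : Euc d → Euc d} (hψ : ∀ z, HasGradientAt ψ (ψ' z) z)
    {c : ℝ} (hc : 0 < c) {u w : Euc d} (hu : u ∈ C)
    (hmin : ∀ z ∈ C, h u + c * Breg ψ ψ' u w ≤ h z + c * Breg ψ ψ' z w)
    {z : Euc d} (hz : z ∈ C) :
    h u ≤ h z + c * (Breg ψ ψ' z w - Breg ψ ψ' z u - Breg ψ ψ' u w) := by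
  have hkey : h u ≤ h z + c * ⟪ψ' u - ψ' w, z - u⟫ := by
    have hlim := dir_tendsto (hψ u) (z - u)
    have hev : ∀ᶠ t in nhdsWithin (0:ℝ) (Set.Ioi 0),
        0 ≤ (h z - h u) + c * ((ψ (u + t • (z - u)) - ψ u) / t) - c * ⟪ψ' w, z - u⟫ := by
      filter_upwards [Ioc_mem_nhdsGT (one_pos : (0:ℝ) < 1)] with t ht
      set zt := u + t • (z - u) with hzt
      have hmemzt : zt ∈ C := by
        have : zt = (1 - t) • u + t • z := by
          rw [hzt, sub_smul, one_smul, smul_sub]; abel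
        rw [this]
        exact hC hu hz (by linarith [ht.2]) (le_of_lt ht.1) (by ring)
      have h1 := hmin zt hmemzt
      have h2 : h zt ≤ (1 - t) * h u + t * h z := by
        have : zt = (1 - t) • u + t • z := by
          rw [hzt, sub_smul, one_smul, smul_sub]; abel
        rw [this]
        have := hh.2 (Set.mem_univ u) (Set.mem_univ z)
          (by linarith [ht.2] : (0:ℝ) ≤ 1 - t) (le_of_lt ht.1) (by ring)
        simpa only [smul_eq_mul] using this
      have h3 : Breg ψ ψ' zt w - Breg ψ ψ' u w
          = ψ zt - ψ u - t * ⟪ψ' w, z - u⟫ := by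
        simp only [Breg, hzt]
        have : u + t • (z - u) - w = (u - w) + t • (z - u) := by abel
        rw [this, inner_add_right, real_inner_smul_right]
        ring
      have h3' : c * Breg ψ ψ' zt w - c * Breg ψ ψ' u w
          = c * (ψ zt - ψ u) - c * (t * ⟪ψ' w, z - u⟫) := by
        rw [← mul_sub, h3]; ring
      have h4 : 0 ≤ t * (h z - h u) + c * (ψ zt - ψ u) - c * (t * ⟪ψ' w, z - u⟫) := by
        nlinarith [h1, h2, h3']
      have e2 : (h z - h u) + c * ((ψ zt - ψ u) / t) - c * ⟪ψ' w, z - u⟫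
          = (t * (h z - h u) + c * (ψ zt - ψ u) - c * (t * ⟪ψ' w, z - u⟫)) / t := by
        set I : ℝ := ⟪ψ' w, z - u⟫ with hI
        have htne : t ≠ 0 := ne_of_gt ht.1
        field_simp
      rw [e2]; exact div_nonneg h4 ht.1.le
    have hlim2 : Tendsto
        (fun t : ℝ => (h z - h u) + c * ((ψ (u + t • (z - u)) - ψ u) / t) - c * ⟪ψ' w, z - u⟫)
        (nhdsWithin (0:ℝ) (Set.Ioi 0))
        (nhds ((h z - h u) + c * ⟪ψ' u, z - u⟫ - c * ⟪ψ' w, z - u⟫)) :=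
      (((hlim.const_mul c).const_add (h z - h u)).sub_const (c * ⟪ψ' w, z - u⟫))
    have h5 := ge_of_tendsto hlim2 hev
    rw [inner_sub_left]
    linarith
  have hid : ⟪ψ' u - ψ' w, z - u⟫
      = Breg ψ ψ' z w - Breg ψ ψ' z u - Breg ψ ψ' u w := by
    simp only [Breg, inner_sub_left]
    have e1 : z - w = (z - u) + (u - w) := by abel
    rw [e1, inner_add_right]
    ring
  rw [hid] at hkey; exact hkey

lemma hasGradientAt_const_mul_normsq {d : ℕ} (c : ℝ) (p : Euc d) :
    HasGradientAt (fun z : Euc d => c / 2 * ‖z‖ ^ 2) ((c / 2 * 2) • p) p := by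
  have h1 : HasFDerivAt (fun z : Euc d => ⟪z, z⟫)
      ((fderivInnerCLM ℝ (p, p)).comp ((ContinuousLinearMap.id ℝ (Euc d)).prod
        (ContinuousLinearMap.id ℝ (Euc d)))) p :=
    (hasFDerivAt_id p).inner ℝ (hasFDerivAt_id p)
  have h2 := h1.const_mul (c / 2)
  rw [hasGradientAt_iff_hasFDerivAt]
  have heq : (InnerProductSpace.toDual ℝ (Euc d)) ((c / 2 * 2) • p)
      = (c / 2) • ((fderivInnerCLM ℝ (p, p)).comp ((ContinuousLinearMap.id ℝ (Euc d)).prod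
        (ContinuousLinearMap.id ℝ (Euc d)))) := by
    ext v
    simp [fderivInnerCLM_apply, real_inner_smul_left, real_inner_comm]
    have hc : ∀ q r : Euc d, ∑ i : Fin d, q i * r i = ∑ i : Fin d, r i * q i := by
      intro q r; exact Finset.sum_congr rfl (fun i _ => mul_comm _ _)
    ring
  rw [heq]
  refine h2.congr_fderiv rfl |>.congr_of_eventuallyEq ?_
  filter_upwards with z
  rw [real_inner_self_eq_norm_sq]

lemma breg_strong {d : ℕ} {φ : Euc d → ℝ} {φ' : Euc d → Euc d} {ϱ : ℝ}
    (hg : ∀ z, HasGradientAt φ (φ' z) z)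
    (hsc : ConvexOn ℝ Set.univ (fun z => φ z - ϱ / 2 * ‖z‖ ^ 2))
    (u v : Euc d) : ϱ / 2 * ‖u - v‖ ^ 2 ≤ Breg φ φ' u v := by
  have hχ : ∀ z, HasGradientAt (fun z : Euc d => φ z - ϱ / 2 * ‖z‖ ^ 2)
      (φ' z - (ϱ / 2 * 2) • z) z := by
    intro z
    rw [hasGradientAt_iff_hasFDerivAt, map_sub]
    exact (hg z).hasFDerivAt.sub (hasGradientAt_const_mul_normsq ϱ z).hasFDerivAt
  have h := grad_ineq hsc hχ u v
  have hn : ‖u - v‖ ^ 2 = ‖u‖ ^ 2 - 2 * ⟪u, v⟫ + ‖v‖ ^ 2 := by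
    rw [@norm_sub_sq_real]
  have hi : ⟪φ' v - (ϱ / 2 * 2) • v, u - v⟫
      = ⟪φ' v, u - v⟫ - ϱ * ⟪v, u - v⟫ := by
    rw [inner_sub_left, real_inner_smul_left]; ring
  have hi2 : ⟪v, u - v⟫ = ⟪v, u⟫ - ‖v‖ ^ 2 := by
    rw [inner_sub_right, real_inner_self_eq_norm_sq]
  rw [hi, hi2] at h
  simp only [Breg]
  have hn2 : ϱ / 2 * ‖u - v‖ ^ 2 = ϱ / 2 * ‖u‖ ^ 2 - ϱ * ⟪v, u⟫ + ϱ / 2 * ‖v‖ ^ 2 := by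
    rw [hn, real_inner_comm v u]; ring
  nlinarith [h, hn2]

lemma breg_between {d : ℕ} {ψ φn : Euc d → ℝ} {ψ' φn' : Euc d → Euc d} {L0 : ℝ}
    (hψg : ∀ z, HasGradientAt ψ (ψ' z) z) (hφng : ∀ z, HasGradientAt φn (φn' z) z)
    (hLψφ : ConvexOn ℝ Set.univ (fun z => L0 * ψ z - φn z)) (u v : Euc d) :
    Breg φn φn' u v ≤ L0 * Breg ψ ψ' u v := by
  have hχ : ∀ z, HasGradientAt (fun z : Euc d => L0 * ψ z - φn z)
      (L0 • ψ' z - φn' z) z := by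
    intro z
    rw [hasGradientAt_iff_hasFDerivAt, map_sub, map_smul]
    exact ((hψg z).hasFDerivAt.const_mul L0).sub (hφng z).hasFDerivAt
  have h := grad_ineq hLψφ hχ u v
  have hi : ⟪L0 • ψ' v - φn' v, u - v⟫ = L0 * ⟪ψ' v, u - v⟫ - ⟪φn' v, u - v⟫ := by
    rw [inner_sub_left, real_inner_smul_left]
  rw [hi] at h
  simp only [Breg]
  nlinarith [h]

set_option maxHeartbeats 2000000 in
/-- ergodic `O(1/N)` convergence rate of SPIDA. -/
theorem spida_ergodic_rate {n m : ℕ}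
    (X : Set (Euc n)) (Y : Set (Euc m))
    (hXne : X.Nonempty) (hXcl : IsClosed X) (hXcv : Convex ℝ X)
    (hYne : Y.Nonempty) (hYcl : IsClosed Y) (hYcv : Convex ℝ Y)
    (f : Euc n → ℝ) (g : Euc m → ℝ)
    (hf : ConvexOn ℝ Set.univ f) (hflsc : LowerSemicontinuous f)
    (hg : ConvexOn ℝ Set.univ g) (hglsc : LowerSemicontinuous g)
    (A : Euc n →L[ℝ] Euc m)
    (γ μ : ℝ) (hγ : 0 < γ) (hμ : 0 < μ)
    (φ : Euc m → ℝ) (φ' : Euc m → Euc m)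
    (hφg : ∀ z, HasGradientAt φ (φ' z) z) (hφcv : ConvexOn ℝ Set.univ φ)
    (ψ : Euc n → ℝ) (ψ' : Euc n → Euc n)
    (hψg : ∀ z, HasGradientAt ψ (ψ' z) z) (hψcv : ConvexOn ℝ Set.univ ψ)
    (x : ℕ → Euc n) (yt y : ℕ → Euc m)
    (hx0 : x 0 ∈ X) (hy0 : y 0 ∈ Y)
    (hytmem : ∀ k, yt (k + 1) ∈ Y)
    (hytmax : ∀ k, ∀ z ∈ Y, -g z + ⟪A (x k), z⟫ - γ * Breg φ φ' z (y k) ≤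
      -g (yt (k + 1)) + ⟪A (x k), yt (k + 1)⟫ - γ * Breg φ φ' (yt (k + 1)) (y k))
    (hxmem : ∀ k, x (k + 1) ∈ X)
    (hxmin : ∀ k, ∀ z ∈ X,
      f (x (k + 1)) + ⟪A (x (k + 1)), yt (k + 1)⟫ + μ * Breg ψ ψ' (x (k + 1)) (x k) ≤
        f z + ⟪A z, yt (k + 1)⟫ + μ * Breg ψ ψ' z (x k))
    (hymem : ∀ k, y (k + 1) ∈ Y)
    (hymax : ∀ k, ∀ z ∈ Y, -g z + ⟪A (x (k + 1)), z⟫ - γ * Breg φ φ' z (y k) ≤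
      -g (y (k + 1)) + ⟪A (x (k + 1)), y (k + 1)⟫ - γ * Breg φ φ' (y (k + 1)) (y k))
    (ϱ α : ℝ) (hϱ : 0 < ϱ) (hα : 0 < α)
    (hφsc : ConvexOn ℝ Set.univ (fun z => φ z - ϱ / 2 * ‖z‖ ^ 2))
    (hαϱγ : 1 ≤ α * ϱ * γ)
    (φn : Euc n → ℝ) (φn' : Euc n → Euc n)
    (hφng : ∀ z, HasGradientAt φn (φn' z) z)
    (hφnsc : ConvexOn ℝ Set.univ (fun z => φn z - ϱ / 2 * ‖z‖ ^ 2))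
    (L0 : ℝ) (hL0pos : 0 < L0)
    (hL0le : L0 ≤ ϱ * μ / (α * ‖(ContinuousLinearMap.adjoint A).comp A‖))
    (hLψφ : ConvexOn ℝ Set.univ (fun z => L0 * ψ z - φn z))
    (N : ℕ) (hN : 0 < N) :
    ∀ xx ∈ X, ∀ yy ∈ Y,
      Lag f g A ((N : ℝ)⁻¹ • ∑ k ∈ Finset.Icc 1 N, x k) yy
          - Lag f g A xx ((N : ℝ)⁻¹ • ∑ k ∈ Finset.Icc 1 N, yt k) ≤
        (1 / (N : ℝ)) * (γ * Breg φ φ' yy (y 0) + μ * Breg ψ ψ' xx (x 0)) := by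
  intro xx hxx yy hyy
  -- operator norm facts
  have hAbound : L0 * ‖A‖ ^ 2 ≤ μ * ϱ * (γ * ϱ) := by
    have hnorm : ‖(ContinuousLinearMap.adjoint A).comp A‖ = ‖A‖ * ‖A‖ :=
      ContinuousLinearMap.norm_adjoint_comp_self A
    rw [hnorm] at hL0le
    by_cases hA0 : ‖A‖ = 0
    · have hp : (0:ℝ) < μ * ϱ * (γ * ϱ) := by positivity
      rw [hA0]; nlinarith [hp]
    · have hApos : 0 < ‖A‖ := lt_of_le_of_ne (norm_nonneg A) (Ne.symm hA0)
      have hd : 0 < α * (‖A‖ * ‖A‖) := by positivity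
      have h1 : L0 * (α * (‖A‖ * ‖A‖)) ≤ ϱ * μ := (le_div_iff₀ hd).mp hL0le
      have h2 : L0 * ‖A‖ ^ 2 ≤ L0 * ‖A‖ ^ 2 * (α * ϱ * γ) :=
        le_mul_of_one_le_right (by positivity) hαϱγ
      nlinarith [mul_le_mul_of_nonneg_right h1 (le_of_lt (mul_pos hϱ hγ))]
  -- key cross-term bound
  set c1 : ℝ := μ * ϱ / (2 * L0) with hc1def
  set c2 : ℝ := γ * ϱ / 2 with hc2def
  have hc1pos : 0 < c1 := by rw [hc1def]; positivity
  have hc2pos : 0 < c2 := by rw [hc2def]; positivity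
  have hc1id : c1 * (2 * L0) = μ * ϱ := by rw [hc1def]; field_simp
  have h4c : ‖A‖ ^ 2 ≤ 4 * c1 * c2 := by
    have hL0ne : (0:ℝ) < L0 := hL0pos
    have h5 : ‖A‖ ^ 2 * L0 ≤ (4 * c1 * c2) * L0 := by
      have : (4 * c1 * c2) * L0 = μ * ϱ * (γ * ϱ) := by
        rw [hc1def, hc2def]; field_simp; ring
      rw [this]; linarith [hAbound]
    exact le_of_mul_le_mul_right h5 hL0ne
  have hcrossgen : ∀ (u : Euc n) (v : Euc m),
      ⟪A u, v⟫ ≤ c1 * ‖u‖ ^ 2 + c2 * ‖v‖ ^ 2 := by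
    intro u v
    have h1 : ⟪A u, v⟫ ≤ ‖A‖ * ‖u‖ * ‖v‖ := by
      calc ⟪A u, v⟫ ≤ ‖A u‖ * ‖v‖ := real_inner_le_norm _ _
        _ ≤ ‖A‖ * ‖u‖ * ‖v‖ :=
          mul_le_mul_of_nonneg_right (A.le_opNorm u) (norm_nonneg v)
    have h2 : ‖A‖ * ‖u‖ * ‖v‖ ≤ c1 * ‖u‖ ^ 2 + c2 * ‖v‖ ^ 2 := by
      nlinarith [sq_nonneg (2 * c1 * ‖u‖ - ‖A‖ * ‖v‖),
        mul_nonneg (sub_nonneg.mpr h4c) (sq_nonneg ‖v‖),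
        norm_nonneg u, norm_nonneg v, norm_nonneg A]
    linarith
  -- convexity of the partial objectives
  have hconvy : ∀ a : Euc m, ConvexOn ℝ Set.univ (fun z : Euc m => g z - ⟪a, z⟫) := by
    intro a
    refine ⟨convex_univ, fun p _ q _ s t hs ht hst => ?_⟩
    have hgc := hg.2 (Set.mem_univ p) (Set.mem_univ q) hs ht hst
    simp only [smul_eq_mul] at hgc ⊢
    rw [inner_add_right, real_inner_smul_right, real_inner_smul_right]
    linarith
  have hconvx : ∀ b : Euc m, ConvexOn ℝ Set.univ (fun z : Euc n => f z + ⟪A z, b⟫) := by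
    intro b
    refine ⟨convex_univ, fun p _ q _ s t hs ht hst => ?_⟩
    have hfc := hf.2 (Set.mem_univ p) (Set.mem_univ q) hs ht hst
    simp only [smul_eq_mul] at hfc ⊢
    rw [map_add, map_smul, map_smul, inner_add_left, real_inner_smul_left,
      real_inner_smul_left]
    linarith
  -- per-iteration estimate
  have key : ∀ k : ℕ,
      Lag f g A (x (k + 1)) yy - Lag f g A xx (yt (k + 1)) ≤
        γ * (Breg φ φ' yy (y k) - Breg φ φ' yy (y (k + 1))) +
        μ * (Breg ψ ψ' xx (x k) - Breg ψ ψ' xx (x (k + 1))) := by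
    intro k
    have P1 : g (y (k+1)) - ⟪A (x (k+1)), y (k+1)⟫ ≤
        (g yy - ⟪A (x (k+1)), yy⟫) + γ * (Breg φ φ' yy (y k) -
          Breg φ φ' yy (y (k+1)) - Breg φ φ' (y (k+1)) (y k)) := by
      have := prox_step hYcv (hconvy (A (x (k+1)))) hφg hγ (hymem k)
        (fun z hz => by have := hymax k z hz; linarith) hyy
      simpa using this
    have P2 : g (yt (k+1)) - ⟪A (x k), yt (k+1)⟫ ≤
        (g (y (k+1)) - ⟪A (x k), y (k+1)⟫) + γ * (Breg φ φ' (y (k+1)) (y k) -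
          Breg φ φ' (y (k+1)) (yt (k+1)) - Breg φ φ' (yt (k+1)) (y k)) := by
      have := prox_step hYcv (hconvy (A (x k))) hφg hγ (hytmem k)
        (fun z hz => by have := hytmax k z hz; linarith) (hymem k)
      simpa using this
    have P3 : f (x (k+1)) + ⟪A (x (k+1)), yt (k+1)⟫ ≤
        (f xx + ⟪A xx, yt (k+1)⟫) + μ * (Breg ψ ψ' xx (x k) -
          Breg ψ ψ' xx (x (k+1)) - Breg ψ ψ' (x (k+1)) (x k)) := by
      have := prox_step hXcv (hconvx (yt (k+1))) hψg hμ (hxmem k)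
        (fun z hz => by have := hxmin k z hz; linarith) hxx
      simpa using this
    have hb1 : γ * (ϱ / 2 * ‖y (k+1) - yt (k+1)‖ ^ 2) ≤
        γ * Breg φ φ' (y (k+1)) (yt (k+1)) :=
      mul_le_mul_of_nonneg_left (breg_strong hφg hφsc _ _) hγ.le
    have hb2 : 0 ≤ Breg φ φ' (yt (k+1)) (y k) := breg_nonneg hφcv hφg _ _
    have hb3 : μ * (ϱ / (2 * L0) * ‖x (k+1) - x k‖ ^ 2) ≤
        μ * Breg ψ ψ' (x (k+1)) (x k) := by
      refine mul_le_mul_of_nonneg_left ?_ hμ.le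
      have h1 := breg_strong hφng hφnsc (x (k+1)) (x k)
      have h2 := breg_between hψg hφng hLψφ (x (k+1)) (x k)
      rw [div_mul_eq_mul_div, div_le_iff₀ (by positivity : (0:ℝ) < 2 * L0)]
      nlinarith [h1, h2]
    have hcross : ⟪A (x (k+1)) - A (x k), y (k+1) - yt (k+1)⟫ ≤
        c1 * ‖x (k+1) - x k‖ ^ 2 + c2 * ‖y (k+1) - yt (k+1)‖ ^ 2 := by
      have := hcrossgen (x (k+1) - x k) (y (k+1) - yt (k+1))
      rwa [map_sub] at this
    have hexp : ⟪A (x (k+1)) - A (x k), y (k+1) - yt (k+1)⟫ =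
        ⟪A (x (k+1)), y (k+1)⟫ - ⟪A (x (k+1)), yt (k+1)⟫ -
        ⟪A (x k), y (k+1)⟫ + ⟪A (x k), yt (k+1)⟫ := by
      rw [inner_sub_left, inner_sub_right, inner_sub_right]; ring
    have hc1e : c1 * ‖x (k+1) - x k‖ ^ 2 = μ * (ϱ / (2 * L0) * ‖x (k+1) - x k‖ ^ 2) := by
      rw [hc1def]; ring
    have hc2e : c2 * ‖y (k+1) - yt (k+1)‖ ^ 2 =
        γ * (ϱ / 2 * ‖y (k+1) - yt (k+1)‖ ^ 2) := by
      rw [hc2def]; ring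
    simp only [Lag]
    rw [hexp] at hcross
    rw [hc1e, hc2e] at hcross
    nlinarith [P1, P2, P3, hb1, hb2, hb3, hcross, hγ.le, mul_nonneg hγ.le hb2]
  -- sum the per-iteration estimates
  have hsum : ∑ k ∈ Finset.range N,
      (Lag f g A (x (k + 1)) yy - Lag f g A xx (yt (k + 1))) ≤
      γ * Breg φ φ' yy (y 0) + μ * Breg ψ ψ' xx (x 0) := by
    have h1 : ∑ k ∈ Finset.range N,
        (Lag f g A (x (k + 1)) yy - Lag f g A xx (yt (k + 1))) ≤
        ∑ k ∈ Finset.range N,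
          (γ * (Breg φ φ' yy (y k) - Breg φ φ' yy (y (k + 1))) +
           μ * (Breg ψ ψ' xx (x k) - Breg ψ ψ' xx (x (k + 1)))) :=
      Finset.sum_le_sum (fun k _ => key k)
    have h2 : ∑ k ∈ Finset.range N,
        (γ * (Breg φ φ' yy (y k) - Breg φ φ' yy (y (k + 1))) +
         μ * (Breg ψ ψ' xx (x k) - Breg ψ ψ' xx (x (k + 1)))) =
        γ * (Breg φ φ' yy (y 0) - Breg φ φ' yy (y N)) +
        μ * (Breg ψ ψ' xx (x 0) - Breg ψ ψ' xx (x N)) := by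
      rw [Finset.sum_add_distrib, ← Finset.mul_sum, ← Finset.mul_sum,
        Finset.sum_range_sub' (fun k => Breg φ φ' yy (y k)),
        Finset.sum_range_sub' (fun k => Breg ψ ψ' xx (x k))]
    have h3 : 0 ≤ Breg φ φ' yy (y N) := breg_nonneg hφcv hφg _ _
    have h4 : 0 ≤ Breg ψ ψ' xx (x N) := breg_nonneg hψcv hψg _ _
    have h5 : 0 ≤ γ * Breg φ φ' yy (y N) := mul_nonneg hγ.le h3
    have h6 : 0 ≤ μ * Breg ψ ψ' xx (x N) := mul_nonneg hμ.le h4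
    rw [h2] at h1
    nlinarith [h1, h5, h6]
  -- ergodic averaging via convexity
  have hNpos : (0:ℝ) < (N:ℝ) := by exact_mod_cast hN
  have hNne : (N:ℝ) ≠ 0 := ne_of_gt hNpos
  have hcard : (Finset.Icc 1 N).card = N := by
    rw [Nat.card_Icc]; omega
  have hw : ∑ _k ∈ Finset.Icc 1 N, (N:ℝ)⁻¹ = 1 := by
    rw [Finset.sum_const, hcard, nsmul_eq_mul]
    field_simp
  have hfavg : f ((N : ℝ)⁻¹ • ∑ k ∈ Finset.Icc 1 N, x k) ≤
      (N:ℝ)⁻¹ * ∑ k ∈ Finset.Icc 1 N, f (x k) := by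
    have := hf.map_sum_le (t := Finset.Icc 1 N) (w := fun _ => (N:ℝ)⁻¹) (p := x)
      (fun _ _ => by positivity) hw (fun _ _ => Set.mem_univ _)
    rw [Finset.smul_sum]
    calc f (∑ k ∈ Finset.Icc 1 N, (N:ℝ)⁻¹ • x k) ≤
        ∑ k ∈ Finset.Icc 1 N, (N:ℝ)⁻¹ * f (x k) := this
      _ = (N:ℝ)⁻¹ * ∑ k ∈ Finset.Icc 1 N, f (x k) := by rw [Finset.mul_sum]
  have hgavg : g ((N : ℝ)⁻¹ • ∑ k ∈ Finset.Icc 1 N, yt k) ≤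
      (N:ℝ)⁻¹ * ∑ k ∈ Finset.Icc 1 N, g (yt k) := by
    have := hg.map_sum_le (t := Finset.Icc 1 N) (w := fun _ => (N:ℝ)⁻¹) (p := yt)
      (fun _ _ => by positivity) hw (fun _ _ => Set.mem_univ _)
    rw [Finset.smul_sum]
    calc g (∑ k ∈ Finset.Icc 1 N, (N:ℝ)⁻¹ • yt k) ≤
        ∑ k ∈ Finset.Icc 1 N, (N:ℝ)⁻¹ * g (yt k) := this
      _ = (N:ℝ)⁻¹ * ∑ k ∈ Finset.Icc 1 N, g (yt k) := by rw [Finset.mul_sum]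
  have hAx : ⟪A ((N : ℝ)⁻¹ • ∑ k ∈ Finset.Icc 1 N, x k), yy⟫ =
      (N:ℝ)⁻¹ * ∑ k ∈ Finset.Icc 1 N, ⟪A (x k), yy⟫ := by
    rw [map_smul, real_inner_smul_left, map_sum, sum_inner]
  have hAy : ⟪A xx, (N : ℝ)⁻¹ • ∑ k ∈ Finset.Icc 1 N, yt k⟫ =
      (N:ℝ)⁻¹ * ∑ k ∈ Finset.Icc 1 N, ⟪A xx, yt k⟫ := by
    rw [real_inner_smul_right, inner_sum]
  -- convert Icc sums of Lagrangian gaps to a range sum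
  have hIcc : ∑ k ∈ Finset.Icc 1 N, (Lag f g A (x k) yy - Lag f g A xx (yt k)) =
      ∑ k ∈ Finset.range N, (Lag f g A (x (k + 1)) yy - Lag f g A xx (yt (k + 1))) := by
    rw [← Finset.Ico_add_one_right_eq_Icc, Finset.sum_Ico_eq_sum_range]
    refine Finset.sum_congr (by norm_num) (fun i _ => by rw [Nat.add_comm 1 i])
  -- assemble
  have hexpand : ∑ k ∈ Finset.Icc 1 N,
      (f (x k) + ⟪A (x k), yy⟫ - g yy - (f xx + ⟪A xx, yt k⟫ - g (yt k))) =
      (∑ k ∈ Finset.Icc 1 N, f (x k)) + (∑ k ∈ Finset.Icc 1 N, ⟪A (x k), yy⟫) -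
      (N:ℝ) * g yy - (N:ℝ) * f xx - (∑ k ∈ Finset.Icc 1 N, ⟪A xx, yt k⟫) +
      (∑ k ∈ Finset.Icc 1 N, g (yt k)) := by
    rw [Finset.sum_sub_distrib, Finset.sum_sub_distrib, Finset.sum_sub_distrib,
      Finset.sum_add_distrib, Finset.sum_add_distrib, Finset.sum_const, Finset.sum_const,
      hcard, nsmul_eq_mul]
    ring
  have hfinal : Lag f g A ((N : ℝ)⁻¹ • ∑ k ∈ Finset.Icc 1 N, x k) yy
      - Lag f g A xx ((N : ℝ)⁻¹ • ∑ k ∈ Finset.Icc 1 N, yt k) ≤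
      (N:ℝ)⁻¹ * ∑ k ∈ Finset.Icc 1 N, (Lag f g A (x k) yy - Lag f g A xx (yt k)) := by
    simp only [Lag]
    rw [hAx, hAy, hexpand]
    have e1 : (N:ℝ)⁻¹ * ((∑ k ∈ Finset.Icc 1 N, f (x k)) +
        (∑ k ∈ Finset.Icc 1 N, ⟪A (x k), yy⟫) - (N:ℝ) * g yy - (N:ℝ) * f xx -
        (∑ k ∈ Finset.Icc 1 N, ⟪A xx, yt k⟫) + (∑ k ∈ Finset.Icc 1 N, g (yt k))) =
        (N:ℝ)⁻¹ * (∑ k ∈ Finset.Icc 1 N, f (x k)) +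
        (N:ℝ)⁻¹ * (∑ k ∈ Finset.Icc 1 N, ⟪A (x k), yy⟫) - g yy - f xx -
        (N:ℝ)⁻¹ * (∑ k ∈ Finset.Icc 1 N, ⟪A xx, yt k⟫) +
        (N:ℝ)⁻¹ * (∑ k ∈ Finset.Icc 1 N, g (yt k)) := by
      field_simp
    rw [e1]
    linarith [hfavg, hgavg]
  have hmono : (N:ℝ)⁻¹ * ∑ k ∈ Finset.Icc 1 N, (Lag f g A (x k) yy - Lag f g A xx (yt k)) ≤
      (N:ℝ)⁻¹ * (γ * Breg φ φ' yy (y 0) + μ * Breg ψ ψ' xx (x 0)) := by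
    rw [hIcc]
    exact mul_le_mul_of_nonneg_left hsum (by positivity)
  rw [one_div]
  linarith [hfinal, hmono]
end
end

section
/- (Global convergence of SPIDA.) Under the standing assumption with strict inequality αϱγ > 1, suppose L possesses at least one saddle point and both kernels φ (on ℝ^m) and ψ (on ℝ^n) are strongly convex with continuous gradients. Then the SPIDA sequence (x^k, y^k), k = 0, 1, 2, …, started at any (x^0, y^0) ∈ X × Y converges to some saddle point (x^∞, y^∞) of L. -/
noncomputable section
open scoped RealInnerProductSpace
open Filter

open Topology

namespace SPIDA

lemma dir_tendsto {d : ℕ} {h : Euc d → ℝ} {h' : Euc d} {v : Euc d}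
    (hg : HasGradientAt h h' v) (w : Euc d) :
    Tendsto (fun t : ℝ => (h (v + t • w) - h v) / t) (𝓝[>] (0:ℝ)) (𝓝 ⟪h', w⟫) := by
  have hline : HasDerivAt (fun t : ℝ => v + t • w) w 0 := by
    simpa using (((hasDerivAt_id (0:ℝ)).smul_const w).const_add v)
  have hF : HasDerivAt (fun t : ℝ => h (v + t • w)) ⟪h', w⟫ 0 := by
    have h0 : HasFDerivAt h ((InnerProductSpace.toDual ℝ (Euc d)) h') (v + (0:ℝ) • w) := by
      simpa using hg.hasFDerivAt
    have := h0.comp_hasDerivAt 0 hline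
    simpa [InnerProductSpace.toDual_apply_apply, Function.comp_def] using this
  have := hasDerivAt_iff_tendsto_slope.1 hF
  have h2 := this.mono_left (nhdsWithin_mono _ (by intro t ht; exact ne_of_gt ht))
  refine h2.congr' ?_
  filter_upwards [self_mem_nhdsWithin] with t ht
  simp [slope_def_field]

lemma grad_ineq {d : ℕ} {h : Euc d → ℝ} {h' : Euc d → Euc d}
    (hc : ConvexOn ℝ Set.univ h) (hg : ∀ z, HasGradientAt h (h' z) z)
    (u v : Euc d) : h v + ⟪h' v, u - v⟫ ≤ h u := by
  have key : ⟪h' v, u - v⟫ ≤ h u - h v := by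
    refine le_of_tendsto (dir_tendsto (hg v) (u - v)) ?_
    filter_upwards [Ioo_mem_nhdsGT_of_mem (Set.left_mem_Ico.2 one_pos)] with t ht
    have hcomb := hc.2 (Set.mem_univ v) (Set.mem_univ u)
      (by linarith [ht.2] : (0:ℝ) ≤ 1 - t) ht.1.le (by ring)
    have hpt : (1 - t) • v + t • u = v + t • (u - v) := by
      simp [smul_sub, sub_smul]; abel
    rw [hpt] at hcomb
    rw [div_le_iff₀ ht.1]
    have : (1 - t) • h v + t • h u = h v + t * (h u - h v) := by
      simp [smul_eq_mul]; ring
    rw [this] at hcomb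
    linarith
  linarith


lemma grad_shift {d : ℕ} {φ : Euc d → ℝ} {φ' : Euc d → Euc d} {c : ℝ}
    (hg : ∀ z, HasGradientAt φ (φ' z) z) (z : Euc d) :
    HasGradientAt (fun w => φ w - c / 2 * ‖w‖ ^ 2) (φ' z - c • z) z := by
  rw [hasGradientAt_iff_hasFDerivAt]
  have h2 : HasFDerivAt (fun w : Euc d => ‖w‖ ^ 2)
      (2 • (innerSL ℝ z).comp (ContinuousLinearMap.id ℝ (Euc d))) z := by
    simpa using (hasFDerivAt_id z).norm_sq
  have h3 := ((hg z).hasFDerivAt).sub (h2.const_mul (c / 2))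
  convert h3 using 1
  · rfl
  · rfl
  · rfl
  ext w
  simp [InnerProductSpace.toDual_apply_apply, inner_sub_left, real_inner_smul_left,
    two_smul]
  ring

lemma breg_sc {d : ℕ} {φ : Euc d → ℝ} {φ' : Euc d → Euc d} {c : ℝ}
    (hg : ∀ z, HasGradientAt φ (φ' z) z)
    (hsc : ConvexOn ℝ Set.univ (fun z => φ z - c / 2 * ‖z‖ ^ 2)) (u v : Euc d) :
    c / 2 * ‖u - v‖ ^ 2 ≤ Breg φ φ' u v := by
  have := grad_ineq hsc (fun z => grad_shift hg z) u v
  simp only [inner_sub_left, real_inner_smul_left] at this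
  have hn : ‖u - v‖ ^ 2 = ‖u‖ ^ 2 - 2 * ⟪u, v⟫ + ‖v‖ ^ 2 := norm_sub_sq_real u v
  have hv : ⟪v, u - v⟫ = ⟪v, u⟫ - ‖v‖ ^ 2 := by
    rw [inner_sub_right, real_inner_self_eq_norm_sq]
  have hc : ⟪v, u⟫ = ⟪u, v⟫ := real_inner_comm u v
  have hn' : c / 2 * ‖u - v‖ ^ 2 = c / 2 * ‖u‖ ^ 2 - c * ⟪u, v⟫ + c / 2 * ‖v‖ ^ 2 := by
    rw [hn]; ring
  have hv' : c * ⟪v, u - v⟫ = c * ⟪u, v⟫ - c * ‖v‖ ^ 2 := by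
    rw [hv, hc]; ring
  simp only [Breg]
  linarith [this, hn', hv']

lemma breg_nonneg {d : ℕ} {φ : Euc d → ℝ} {φ' : Euc d → Euc d}
    (hg : ∀ z, HasGradientAt φ (φ' z) z)
    (hc : ConvexOn ℝ Set.univ φ) (u v : Euc d) : 0 ≤ Breg φ φ' u v := by
  have := grad_ineq hc hg u v
  simp only [Breg]; linarith

lemma three_point {d : ℕ} {S : Set (Euc d)} (hS : Convex ℝ S)
    {H : Euc d → ℝ} (hH : ConvexOn ℝ Set.univ H)
    {γ : ℝ} (hγ : 0 < γ)
    {φ : Euc d → ℝ} {φ' : Euc d → Euc d} (hφg : ∀ z, HasGradientAt φ (φ' z) z)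
    {y0 w : Euc d} (hw : w ∈ S)
    (hmin : ∀ z ∈ S, H w + γ * Breg φ φ' w y0 ≤ H z + γ * Breg φ φ' z y0) :
    ∀ z ∈ S, H w + γ * Breg φ φ' w y0 + γ * Breg φ φ' z w ≤ H z + γ * Breg φ φ' z y0 := by
  intro z hz
  have key : γ * (⟪φ' y0, z - w⟫ - ⟪φ' w, z - w⟫) ≤ H z - H w := by
    have hlim : Tendsto (fun t : ℝ =>
        γ * (⟪φ' y0, z - w⟫ - (φ (w + t • (z - w)) - φ w) / t))
        (𝓝[>] (0:ℝ)) (𝓝 (γ * (⟪φ' y0, z - w⟫ - ⟪φ' w, z - w⟫))) :=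
      (tendsto_const_nhds.sub (dir_tendsto (hφg w) (z - w))).const_mul γ
    refine le_of_tendsto hlim ?_
    filter_upwards [Ioo_mem_nhdsGT_of_mem (Set.left_mem_Ico.2 one_pos)] with t ht
    set zt := w + t • (z - w) with hzt
    have hmem : zt ∈ S := hS.add_smul_sub_mem hw hz ⟨ht.1.le, ht.2.le⟩
    have h1 := hmin zt hmem
    have hHt : H zt ≤ H w + t * (H z - H w) := by
      have hcomb := hH.2 (Set.mem_univ w) (Set.mem_univ z)
        (by linarith [ht.2] : (0:ℝ) ≤ 1 - t) ht.1.le (by ring)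
      have hpt : (1 - t) • w + t • z = zt := by
        simp [hzt, smul_sub, sub_smul]; abel
      rw [hpt] at hcomb
      have : (1 - t) • H w + t • H z = H w + t * (H z - H w) := by
        simp [smul_eq_mul]; ring
      linarith [hcomb, this.le, this.ge]
    have hinner : ⟪φ' y0, zt - y0⟫ = ⟪φ' y0, w - y0⟫ + t * ⟪φ' y0, z - w⟫ := by
      rw [show zt - y0 = (w - y0) + t • (z - w) by rw [hzt]; abel,
        inner_add_right, real_inner_smul_right]
    have hB' : γ * Breg φ φ' zt y0 - γ * Breg φ φ' w y0
        = γ * (φ zt - φ w) - γ * (t * ⟪φ' y0, z - w⟫) := by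
      simp only [Breg]
      rw [hinner]; ring
    refine (mul_le_mul_iff_of_pos_right ht.1).mp ?_
    have hexp : ∀ c p : ℝ, (γ * (c - p / t)) * t = γ * (t * c) - γ * p := by
      intro c p
      have ht0 : (t:ℝ) ≠ 0 := ne_of_gt ht.1
      field_simp
    rw [hexp ⟪φ' y0, z - w⟫ (φ zt - φ w)]
    nlinarith [h1, hHt, hB']
  have hid : Breg φ φ' w y0 + Breg φ φ' z w - Breg φ φ' z y0
      = ⟪φ' y0, z - w⟫ - ⟪φ' w, z - w⟫ := by
    simp only [Breg]
    have h1 : ⟪φ' y0, z - y0⟫ - ⟪φ' y0, w - y0⟫ = ⟪φ' y0, z - w⟫ := by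
      rw [← inner_sub_right]; congr 1; abel
    linarith [h1.le, h1.ge]
  have hid' : γ * Breg φ φ' w y0 + γ * Breg φ φ' z w - γ * Breg φ φ' z y0
      = γ * ⟪φ' y0, z - w⟫ - γ * ⟪φ' w, z - w⟫ := by
    linear_combination γ * hid
  nlinarith [key, hid']


lemma lsc_le_of_tendsto {d : ℕ} {f : Euc d → ℝ} (hf : LowerSemicontinuous f)
    {u : ℕ → Euc d} {a : Euc d} (hu : Tendsto u atTop (𝓝 a))
    {R : ℕ → ℝ} {Rl : ℝ} (hR : Tendsto R atTop (𝓝 Rl))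
    (hle : ∀ j, f (u j) ≤ R j) : f a ≤ Rl := by
  by_contra hcon
  push_neg at hcon
  set c := (Rl + f a) / 2 with hc
  have hc1 : c < f a := by rw [hc]; linarith
  have hc2 : Rl < c := by rw [hc]; linarith
  have hev : ∀ᶠ j in atTop, c < f (u j) := hu.eventually (hf a c hc1)
  have hev2 : ∀ᶠ j in atTop, c ≤ R j := by
    filter_upwards [hev] with j hj
    exact le_trans hj.le (hle j)
  have := ge_of_tendsto hR hev2
  linarith

lemma tendsto_of_antitone_subseq {W : ℕ → ℝ} (ha : Antitone W)
    (hb : ∀ k, 0 ≤ W k) {φs : ℕ → ℕ} (hφ : Tendsto φs atTop atTop)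
    {c : ℝ} (h0 : Tendsto (fun j => W (φs j)) atTop (𝓝 c)) :
    Tendsto W atTop (𝓝 c) := by
  have hbdd : BddBelow (Set.range W) := ⟨0, by rintro _ ⟨k, rfl⟩; exact hb k⟩
  have h1 : Tendsto W atTop (𝓝 (⨅ k, W k)) := tendsto_atTop_ciInf ha hbdd
  have h2 : Tendsto (fun j => W (φs j)) atTop (𝓝 (⨅ k, W k)) := h1.comp hφ
  rwa [tendsto_nhds_unique h2 h0] at h1

lemma norm_tendsto_of_sq {E : Type*} [NormedAddCommGroup E] {u : ℕ → E}
    (h : Tendsto (fun k => ‖u k‖ ^ 2) atTop (𝓝 0)) :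
    Tendsto (fun k => ‖u k‖) atTop (𝓝 0) := by
  have := (Real.continuous_sqrt.tendsto 0).comp h
  simp only [Function.comp_def, Real.sqrt_zero] at this
  refine this.congr fun k => ?_
  rw [Real.sqrt_sq (norm_nonneg _)]

lemma amgm {a b c s r : ℝ} (ha : 0 ≤ a) (hb : 0 ≤ b) (hc : 0 ≤ c)
    (habc : a * b = c ^ 2) (hs : 0 ≤ s) (hr : 0 ≤ r) :
    c * s * r ≤ a / 2 * s ^ 2 + b / 2 * r ^ 2 := by
  have h1 : Real.sqrt a * Real.sqrt b = c := by
    rw [← Real.sqrt_mul ha, habc, Real.sqrt_sq hc]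
  have e : (Real.sqrt a * s - Real.sqrt b * r) ^ 2
      = a * s ^ 2 - 2 * c * (s * r) + b * r ^ 2 := by
    have ea := Real.sq_sqrt ha
    have eb := Real.sq_sqrt hb
    calc (Real.sqrt a * s - Real.sqrt b * r) ^ 2
        = (Real.sqrt a) ^ 2 * s ^ 2 - 2 * (Real.sqrt a * Real.sqrt b) * (s * r)
          + (Real.sqrt b) ^ 2 * r ^ 2 := by ring
      _ = a * s ^ 2 - 2 * c * (s * r) + b * r ^ 2 := by rw [ea, eb, h1]
  have := sq_nonneg (Real.sqrt a * s - Real.sqrt b * r)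
  rw [e] at this
  linarith

lemma tendsto_of_const_mul {c : ℝ} (hc : c ≠ 0) {q : ℕ → ℝ}
    (h : Tendsto (fun k => c * q k) atTop (𝓝 0)) : Tendsto q atTop (𝓝 0) := by
  have h2 := h.const_mul c⁻¹
  rw [mul_zero] at h2
  refine h2.congr fun k => ?_
  rw [inv_mul_cancel_left₀ hc]

lemma tendsto_shift {E : Type*} [NormedAddCommGroup E] {v w : ℕ → E} {a : E}
    (hv : Tendsto v atTop (𝓝 a))
    (hd : Tendsto (fun j => ‖w j - v j‖) atTop (𝓝 0)) :
    Tendsto w atTop (𝓝 a) := by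
  have h1 : Tendsto (fun j => w j - v j) atTop (𝓝 0) :=
    tendsto_zero_iff_norm_tendsto_zero.2 hd
  have := hv.add h1
  simpa using this

end SPIDA

set_option maxHeartbeats 2000000 in
open SPIDA in
/-- global convergence of SPIDA to a saddle point. -/
theorem spida_global_convergence {n m : ℕ}
    (X : Set (Euc n)) (Y : Set (Euc m))
    (hXne : X.Nonempty) (hXcl : IsClosed X) (hXcv : Convex ℝ X)
    (hYne : Y.Nonempty) (hYcl : IsClosed Y) (hYcv : Convex ℝ Y)
    (f : Euc n → ℝ) (g : Euc m → ℝ)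
    (hf : ConvexOn ℝ Set.univ f) (hflsc : LowerSemicontinuous f)
    (hg : ConvexOn ℝ Set.univ g) (hglsc : LowerSemicontinuous g)
    (A : Euc n →L[ℝ] Euc m)
    (γ μ : ℝ) (hγ : 0 < γ) (hμ : 0 < μ)
    (φ : Euc m → ℝ) (φ' : Euc m → Euc m)
    (hφg : ∀ z, HasGradientAt φ (φ' z) z) (hφcv : ConvexOn ℝ Set.univ φ)
    (ψ : Euc n → ℝ) (ψ' : Euc n → Euc n)
    (hψg : ∀ z, HasGradientAt ψ (ψ' z) z) (hψcv : ConvexOn ℝ Set.univ ψ)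
    (x : ℕ → Euc n) (yt y : ℕ → Euc m)
    (hx0 : x 0 ∈ X) (hy0 : y 0 ∈ Y)
    (hytmem : ∀ k, yt (k + 1) ∈ Y)
    (hytmax : ∀ k, ∀ z ∈ Y, -g z + ⟪A (x k), z⟫ - γ * Breg φ φ' z (y k) ≤
      -g (yt (k + 1)) + ⟪A (x k), yt (k + 1)⟫ - γ * Breg φ φ' (yt (k + 1)) (y k))
    (hxmem : ∀ k, x (k + 1) ∈ X)
    (hxmin : ∀ k, ∀ z ∈ X,
      f (x (k + 1)) + ⟪A (x (k + 1)), yt (k + 1)⟫ + μ * Breg ψ ψ' (x (k + 1)) (x k) ≤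
        f z + ⟪A z, yt (k + 1)⟫ + μ * Breg ψ ψ' z (x k))
    (hymem : ∀ k, y (k + 1) ∈ Y)
    (hymax : ∀ k, ∀ z ∈ Y, -g z + ⟪A (x (k + 1)), z⟫ - γ * Breg φ φ' z (y k) ≤
      -g (y (k + 1)) + ⟪A (x (k + 1)), y (k + 1)⟫ - γ * Breg φ φ' (y (k + 1)) (y k))
    (ϱ α : ℝ) (hϱ : 0 < ϱ) (hα : 0 < α)
    (hφsc : ConvexOn ℝ Set.univ (fun z => φ z - ϱ / 2 * ‖z‖ ^ 2))
    (hαϱγ : 1 ≤ α * ϱ * γ)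
    (φn : Euc n → ℝ) (φn' : Euc n → Euc n)
    (hφng : ∀ z, HasGradientAt φn (φn' z) z)
    (hφnsc : ConvexOn ℝ Set.univ (fun z => φn z - ϱ / 2 * ‖z‖ ^ 2))
    (L0 : ℝ) (hL0pos : 0 < L0)
    (hL0le : L0 ≤ ϱ * μ / (α * ‖(ContinuousLinearMap.adjoint A).comp A‖))
    (hLψφ : ConvexOn ℝ Set.univ (fun z => L0 * ψ z - φn z))
    (hstrict : 1 < α * ϱ * γ)
    (hsaddle_exists : ∃ xs ∈ X, ∃ ys ∈ Y, ∀ xx ∈ X, ∀ yy ∈ Y,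
      Lag f g A xs yy ≤ Lag f g A xs ys ∧ Lag f g A xs ys ≤ Lag f g A xx ys)
    (ς : ℝ) (hς : 0 < ς)
    (hψsc : ConvexOn ℝ Set.univ (fun z => ψ z - ς / 2 * ‖z‖ ^ 2))
    (hφ'cont : Continuous φ') (hψ'cont : Continuous ψ') :
    ∃ xl : Euc n, ∃ yl : Euc m,
      (xl ∈ X ∧ yl ∈ Y ∧ ∀ xx ∈ X, ∀ yy ∈ Y,
        Lag f g A xl yy ≤ Lag f g A xl yl ∧ Lag f g A xl yl ≤ Lag f g A xx yl) ∧
      Tendsto x atTop (nhds xl) ∧ Tendsto y atTop (nhds yl) := by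
  -- continuity of the kernels
  have hφcont : Continuous φ := continuous_iff_continuousAt.2 fun w => (hφg w).continuousAt
  have hψcont : Continuous ψ := continuous_iff_continuousAt.2 fun w => (hψg w).continuousAt
  have hBφcont : ∀ z : Euc m, Continuous (fun w => Breg φ φ' z w) := fun z => by
    unfold Breg
    exact (continuous_const.sub hφcont).sub
      (hφ'cont.inner (continuous_const.sub continuous_id))
  have hBψcont : ∀ z : Euc n, Continuous (fun w => Breg ψ ψ' z w) := fun z => by
    unfold Breg
    exact (continuous_const.sub hψcont).sub
      (hψ'cont.inner (continuous_const.sub continuous_id))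
  -- strong convexity constant for ψ
  set σ : ℝ := ϱ / L0 with hσdef
  have hσ : 0 < σ := div_pos hϱ hL0pos
  have hσeq : L0 * σ = ϱ := by
    rw [hσdef, mul_comm, div_mul_cancel₀ _ (ne_of_gt hL0pos)]
  have hψσc : ConvexOn ℝ Set.univ (fun z => ψ z - σ / 2 * ‖z‖ ^ 2) := by
    have h1 := (hLψφ.add hφnsc).smul (le_of_lt (inv_pos.2 hL0pos))
    convert h1 using 1
    · rfl
    · rfl
    funext z
    show ψ z - σ / 2 * ‖z‖ ^ 2 = L0⁻¹ • ((L0 * ψ z - φn z) + (φn z - ϱ / 2 * ‖z‖ ^ 2))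
    rw [smul_eq_mul, hσdef]
    field_simp
    ring
  have hBψsc : ∀ u v, σ / 2 * ‖u - v‖ ^ 2 ≤ Breg ψ ψ' u v := breg_sc hψg hψσc
  have hBφsc : ∀ u v, ϱ / 2 * ‖u - v‖ ^ 2 ≤ Breg φ φ' u v := breg_sc hφg hφsc
  have hBψ0 : ∀ u v, 0 ≤ Breg ψ ψ' u v := breg_nonneg hψg hψcv
  have hBφ0 : ∀ u v, 0 ≤ Breg φ φ' u v := breg_nonneg hφg hφcv
  -- norm facts
  have hNid : ‖(ContinuousLinearMap.adjoint A).comp A‖ = ‖A‖ * ‖A‖ :=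
    ContinuousLinearMap.norm_adjoint_comp_self A
  have hAfacts : 0 < ‖A‖ ∧ ‖A‖ ^ 2 * (α * L0) ≤ ϱ * μ := by
    rcases eq_or_lt_of_le (norm_nonneg A) with h0 | h0
    · exfalso
      rw [hNid, ← h0, mul_zero, mul_zero, div_zero] at hL0le
      linarith
    · constructor
      · exact h0
      · rw [hNid] at hL0le
        have hd : 0 < α * (‖A‖ * ‖A‖) := by positivity
        rw [le_div_iff₀ hd] at hL0le
        nlinarith [hL0le]
  obtain ⟨hApos, hA2⟩ := hAfacts
  -- constants
  set r : ℝ := Real.sqrt (α * ϱ * γ) with hrdef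
  have hrr : r * r = α * ϱ * γ := Real.mul_self_sqrt (by nlinarith)
  have hr0 : 0 < r := Real.sqrt_pos.2 (by nlinarith)
  have hr1 : 1 < r := by
    by_contra hcon
    push_neg at hcon
    nlinarith [hrr, hr0, mul_le_mul hcon hcon hr0.le zero_le_one]
  set a : ℝ := ‖A‖ ^ 2 * r / (γ * ϱ) with hadef
  set b : ℝ := γ * ϱ / r with hbdef
  have hγϱ : 0 < γ * ϱ := mul_pos hγ hϱ
  have ha0 : 0 < a := by positivity
  have hb0 : 0 < b := by positivity
  have hab : a * b = ‖A‖ ^ 2 := by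
    rw [hadef, hbdef]
    field_simp
  have halt : a < μ * σ := by
    rw [hadef, div_lt_iff₀ hγϱ]
    have hαL0 : 0 < α * L0 := mul_pos hα hL0pos
    refine lt_of_mul_lt_mul_right ?_ hαL0.le
    have e : μ * σ * (γ * ϱ) * (α * L0) = (ϱ * μ) * (r * r) := by
      calc μ * σ * (γ * ϱ) * (α * L0) = (L0 * σ) * (μ * γ * ϱ * α) := by ring
        _ = ϱ * (μ * γ * ϱ * α) := by rw [hσeq]
        _ = (ϱ * μ) * (α * ϱ * γ) := by ring
        _ = (ϱ * μ) * (r * r) := by rw [hrr]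
    rw [e]
    calc ‖A‖ ^ 2 * r * (α * L0) = (‖A‖ ^ 2 * (α * L0)) * r := by ring
      _ ≤ (ϱ * μ) * r := mul_le_mul_of_nonneg_right hA2 hr0.le
      _ < (ϱ * μ) * (r * r) := by
          nlinarith [mul_pos (mul_pos (mul_pos hϱ hμ) hr0) (show (0:ℝ) < r - 1 by linarith)]
  have hblt : b < γ * ϱ := by
    rw [hbdef]
    exact div_lt_self hγϱ hr1
  set ε1 : ℝ := (μ * σ - a) / 2 with hε1def
  set ε2 : ℝ := (γ * ϱ - b) / 2 with hε2def
  have hε1 : 0 < ε1 := by rw [hε1def]; linarith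
  have hε2 : 0 < ε2 := by rw [hε2def]; linarith
  -- cross-term bound
  have hcross : ∀ (u : Euc n) (v : Euc m),
      -(a / 2 * ‖u‖ ^ 2 + b / 2 * ‖v‖ ^ 2) ≤ ⟪A u, v⟫ := by
    intro u v
    have h1 : |⟪A u, v⟫| ≤ ‖A u‖ * ‖v‖ := abs_real_inner_le_norm _ _
    have h2 : ‖A u‖ * ‖v‖ ≤ ‖A‖ * ‖u‖ * ‖v‖ :=
      mul_le_mul_of_nonneg_right (A.le_opNorm u) (norm_nonneg v)
    have h4 : ‖A‖ * ‖u‖ * ‖v‖ ≤ a / 2 * ‖u‖ ^ 2 + b / 2 * ‖v‖ ^ 2 :=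
      amgm ha0.le hb0.le (norm_nonneg A) hab (norm_nonneg u) (norm_nonneg v)
    have h5 := neg_abs_le ⟪A u, v⟫
    linarith
  -- convexity of the partial objectives
  have hgH : ∀ w : Euc m, ConvexOn ℝ Set.univ (fun z => g z - ⟪w, z⟫) := by
    intro w
    have hlin : ConvexOn ℝ Set.univ (fun z : Euc m => -⟪w, z⟫) := by
      refine ⟨convex_univ, fun p _ q _ s t hs ht hst => le_of_eq ?_⟩
      simp only [inner_add_right, real_inner_smul_right, smul_eq_mul, mul_neg, neg_add_rev]
      try ring
    have hfe : (fun z => g z - ⟪w, z⟫) = (g + fun z => -⟪w, z⟫) := by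
      funext z; simp [sub_eq_add_neg]
    rw [hfe]
    exact hg.add hlin
  have hfH : ∀ v : Euc m, ConvexOn ℝ Set.univ (fun z => f z + ⟪A z, v⟫) := by
    intro v
    have hlin : ConvexOn ℝ Set.univ (fun z : Euc n => ⟪A z, v⟫) := by
      refine ⟨convex_univ, fun p _ q _ s t hs ht hst => le_of_eq ?_⟩
      simp only [map_add, map_smul, inner_add_left, real_inner_smul_left, smul_eq_mul]
      try ring
    exact hf.add hlin
  -- three-point inequalities
  have tpP : ∀ k, ∀ z ∈ X,
      f (x (k+1)) + ⟪A (x (k+1)), yt (k+1)⟫ + μ * Breg ψ ψ' (x (k+1)) (x k)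
        + μ * Breg ψ ψ' z (x (k+1))
      ≤ f z + ⟪A z, yt (k+1)⟫ + μ * Breg ψ ψ' z (x k) := by
    intro k z hz
    have h := three_point hXcv (hfH (yt (k+1))) hμ hψg (hxmem k)
      (fun w hw => by have h0 := hxmin k w hw; linarith) z hz
    linarith
  have tpD2 : ∀ k, ∀ z ∈ Y,
      g (y (k+1)) - ⟪A (x (k+1)), y (k+1)⟫ + γ * Breg φ φ' (y (k+1)) (y k)
        + γ * Breg φ φ' z (y (k+1))
      ≤ g z - ⟪A (x (k+1)), z⟫ + γ * Breg φ φ' z (y k) := by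
    intro k z hz
    have h := three_point hYcv (hgH (A (x (k+1)))) hγ hφg (hymem k)
      (fun w hw => by have h0 := hymax k w hw; linarith) z hz
    linarith
  have tpD1 : ∀ k, ∀ z ∈ Y,
      g (yt (k+1)) - ⟪A (x k), yt (k+1)⟫ + γ * Breg φ φ' (yt (k+1)) (y k)
        + γ * Breg φ φ' z (yt (k+1))
      ≤ g z - ⟪A (x k), z⟫ + γ * Breg φ φ' z (y k) := by
    intro k z hz
    have h := three_point hYcv (hgH (A (x k))) hγ hφg (hytmem k)
      (fun w hw => by have h0 := hytmax k w hw; linarith) z hz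
    linarith
  -- the Fejér-type descent inequality
  have descent : ∀ xs, xs ∈ X → ∀ ys, ys ∈ Y →
      (∀ xx ∈ X, ∀ yy ∈ Y, Lag f g A xs yy ≤ Lag f g A xs ys ∧
        Lag f g A xs ys ≤ Lag f g A xx ys) → ∀ k,
      μ * Breg ψ ψ' xs (x (k+1)) + γ * Breg φ φ' ys (y (k+1))
        + ε1 * ‖x (k+1) - x k‖ ^ 2 + ε2 * ‖yt (k+1) - y (k+1)‖ ^ 2
        + γ * Breg φ φ' (yt (k+1)) (y k)
      ≤ μ * Breg ψ ψ' xs (x k) + γ * Breg φ φ' ys (y k) := by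
    intro xs hxs ys hys hsp k
    have h4 := tpP k xs hxs
    have h5 := tpD2 k ys hys
    have h6 := tpD1 k (y (k+1)) (hymem k)
    have hgap : f xs + ⟪A xs, yt (k+1)⟫ - g (yt (k+1))
        ≤ f (x (k+1)) + ⟪A (x (k+1)), ys⟫ - g ys := by
      have h := hsp (x (k+1)) (hxmem k) (yt (k+1)) (hytmem k)
      simp only [Lag] at h
      linarith [h.1, h.2]
    have hcid : ⟪A (x (k+1) - x k), yt (k+1) - y (k+1)⟫
        = ⟪A (x (k+1)), yt (k+1)⟫ - ⟪A (x (k+1)), y (k+1)⟫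
          - ⟪A (x k), yt (k+1)⟫ + ⟪A (x k), y (k+1)⟫ := by
      rw [map_sub, inner_sub_left, inner_sub_right, inner_sub_right]
      ring
    have hcb := hcross (x (k+1) - x k) (yt (k+1) - y (k+1))
    rw [hcid] at hcb
    have h1 : ε1 * ‖x (k+1) - x k‖ ^ 2 + a / 2 * ‖x (k+1) - x k‖ ^ 2
        ≤ μ * Breg ψ ψ' (x (k+1)) (x k) := by
      have hq := mul_le_mul_of_nonneg_left (hBψsc (x (k+1)) (x k)) hμ.le
      have he : ε1 * ‖x (k+1) - x k‖ ^ 2 + a / 2 * ‖x (k+1) - x k‖ ^ 2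
          = μ * (σ / 2 * ‖x (k+1) - x k‖ ^ 2) := by rw [hε1def]; ring
      linarith [he.le, he.ge, hq]
    have h2 : ε2 * ‖yt (k+1) - y (k+1)‖ ^ 2 + b / 2 * ‖yt (k+1) - y (k+1)‖ ^ 2
        ≤ γ * Breg φ φ' (y (k+1)) (yt (k+1)) := by
      have hq0 := hBφsc (y (k+1)) (yt (k+1))
      rw [norm_sub_rev] at hq0
      have hq := mul_le_mul_of_nonneg_left hq0 hγ.le
      have he : ε2 * ‖yt (k+1) - y (k+1)‖ ^ 2 + b / 2 * ‖yt (k+1) - y (k+1)‖ ^ 2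
          = γ * (ϱ / 2 * ‖yt (k+1) - y (k+1)‖ ^ 2) := by rw [hε2def]; ring
      linarith [he.le, he.ge, hq]
    linarith [h4, h5, h6, hgap, hcb, h1, h2]
  -- memberships of all iterates
  have hxmemall : ∀ k, x k ∈ X := by
    intro k
    cases k with
    | zero => exact hx0
    | succ k => exact hxmem k
  have hymemall : ∀ k, y k ∈ Y := by
    intro k
    cases k with
    | zero => exact hy0
    | succ k => exact hymem k
  -- the given saddle point
  obtain ⟨xs, hxs, ys, hys, hsp⟩ := hsaddle_exists
  set V : ℕ → ℝ := fun k => μ * Breg ψ ψ' xs (x k) + γ * Breg φ φ' ys (y k) with hVdef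
  have hdesc := descent xs hxs ys hys hsp
  have hVsucc : ∀ k, V (k+1) ≤ V k := by
    intro k
    have h := hdesc k
    have e1 : 0 ≤ ε1 * ‖x (k+1) - x k‖ ^ 2 := mul_nonneg hε1.le (sq_nonneg _)
    have e2 : 0 ≤ ε2 * ‖yt (k+1) - y (k+1)‖ ^ 2 := mul_nonneg hε2.le (sq_nonneg _)
    have e3 : 0 ≤ γ * Breg φ φ' (yt (k+1)) (y k) := mul_nonneg hγ.le (hBφ0 _ _)
    simp only [hVdef]
    linarith
  have hVanti : Antitone V := antitone_nat_of_succ_le hVsucc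
  have hV0 : ∀ k, 0 ≤ V k := by
    intro k
    have := mul_nonneg hμ.le (hBψ0 xs (x k))
    have := mul_nonneg hγ.le (hBφ0 ys (y k))
    simp only [hVdef]
    linarith
  have hVtend : Tendsto V atTop (𝓝 (⨅ k, V k)) :=
    tendsto_atTop_ciInf hVanti ⟨0, by rintro _ ⟨k, rfl⟩; exact hV0 k⟩
  have hVdiff : Tendsto (fun k => V k - V (k+1)) atTop (𝓝 0) := by
    have h2 : Tendsto (fun k => V (k+1)) atTop (𝓝 (⨅ k, V k)) :=
      hVtend.comp (tendsto_add_atTop_nat 1)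
    have := hVtend.sub h2
    simpa using this
  -- vanishing residuals
  have hterm : ∀ k, ε1 * ‖x (k+1) - x k‖ ^ 2 ≤ V k - V (k+1)
      ∧ ε2 * ‖yt (k+1) - y (k+1)‖ ^ 2 ≤ V k - V (k+1)
      ∧ γ * Breg φ φ' (yt (k+1)) (y k) ≤ V k - V (k+1) := by
    intro k
    have h := hdesc k
    have e1 : 0 ≤ ε1 * ‖x (k+1) - x k‖ ^ 2 := mul_nonneg hε1.le (sq_nonneg _)
    have e2 : 0 ≤ ε2 * ‖yt (k+1) - y (k+1)‖ ^ 2 := mul_nonneg hε2.le (sq_nonneg _)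
    have e3 : 0 ≤ γ * Breg φ φ' (yt (k+1)) (y k) := mul_nonneg hγ.le (hBφ0 _ _)
    refine ⟨?_, ?_, ?_⟩ <;> (simp only [hVdef]; linarith)
  have hdx : Tendsto (fun k => ‖x (k+1) - x k‖) atTop (𝓝 0) := by
    refine norm_tendsto_of_sq (tendsto_of_const_mul (ne_of_gt hε1) ?_)
    exact squeeze_zero (fun k => mul_nonneg hε1.le (sq_nonneg _))
      (fun k => (hterm k).1) hVdiff
  have hdyt : Tendsto (fun k => ‖yt (k+1) - y (k+1)‖) atTop (𝓝 0) := by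
    refine norm_tendsto_of_sq (tendsto_of_const_mul (ne_of_gt hε2) ?_)
    exact squeeze_zero (fun k => mul_nonneg hε2.le (sq_nonneg _))
      (fun k => (hterm k).2.1) hVdiff
  have hdytk : Tendsto (fun k => ‖yt (k+1) - y k‖) atTop (𝓝 0) := by
    have hB : Tendsto (fun k => Breg φ φ' (yt (k+1)) (y k)) atTop (𝓝 0) :=
      tendsto_of_const_mul (ne_of_gt hγ)
        (squeeze_zero (fun k => mul_nonneg hγ.le (hBφ0 _ _)) (fun k => (hterm k).2.2) hVdiff)
    have hsqb : ∀ k, ‖yt (k+1) - y k‖ ^ 2 ≤ 2 / ϱ * Breg φ φ' (yt (k+1)) (y k) := by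
      intro k
      have h := hBφsc (yt (k+1)) (y k)
      rw [show 2 / ϱ * Breg φ φ' (yt (k+1)) (y k)
          = 2 * Breg φ φ' (yt (k+1)) (y k) / ϱ by ring, le_div_iff₀ hϱ]
      nlinarith [h]
    refine norm_tendsto_of_sq (squeeze_zero (fun k => sq_nonneg _) hsqb ?_)
    have := hB.const_mul (2 / ϱ)
    simpa using this
  have hdy : Tendsto (fun k => ‖y (k+1) - y k‖) atTop (𝓝 0) := by
    refine squeeze_zero (fun k => norm_nonneg _) (fun k => ?_)
      (by simpa using hdytk.add hdyt)
    have he : y (k+1) - y k = (yt (k+1) - y k) - (yt (k+1) - y (k+1)) := by abel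
    rw [he]
    exact norm_sub_le _ _
  -- boundedness of the iterates
  set Rx : ℝ := Real.sqrt (2 * V 0 / (μ * σ)) with hRxdef
  set Ry : ℝ := Real.sqrt (2 * V 0 / (γ * ϱ)) with hRydef
  have hxball : ∀ k, x k ∈ Metric.closedBall xs Rx := by
    intro k
    have h1 := hBψsc xs (x k)
    have h2 : μ * Breg ψ ψ' xs (x k) ≤ V 0 := by
      have h3 := hVanti (Nat.zero_le k)
      have h4 := mul_nonneg hγ.le (hBφ0 ys (y k))
      simp only [hVdef] at h3 ⊢
      linarith
    have hsq : ‖xs - x k‖ ^ 2 ≤ 2 * V 0 / (μ * σ) := by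
      rw [le_div_iff₀ (by positivity)]
      nlinarith [mul_le_mul_of_nonneg_left h1 hμ.le]
    rw [Metric.mem_closedBall, dist_eq_norm, ← norm_sub_rev, hRxdef,
      ← Real.sqrt_sq (norm_nonneg (xs - x k))]
    exact Real.sqrt_le_sqrt hsq
  have hyball : ∀ k, y k ∈ Metric.closedBall ys Ry := by
    intro k
    have h1 := hBφsc ys (y k)
    have h2 : γ * Breg φ φ' ys (y k) ≤ V 0 := by
      have h3 := hVanti (Nat.zero_le k)
      have h4 := mul_nonneg hμ.le (hBψ0 xs (x k))
      simp only [hVdef] at h3 ⊢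
      linarith
    have hsq : ‖ys - y k‖ ^ 2 ≤ 2 * V 0 / (γ * ϱ) := by
      rw [le_div_iff₀ (by positivity)]
      nlinarith [mul_le_mul_of_nonneg_left h1 hγ.le]
    rw [Metric.mem_closedBall, dist_eq_norm, ← norm_sub_rev, hRydef,
      ← Real.sqrt_sq (norm_nonneg (ys - y k))]
    exact Real.sqrt_le_sqrt hsq
  -- extraction of a convergent subsequence
  have hK : IsCompact ((Metric.closedBall xs Rx) ×ˢ (Metric.closedBall ys Ry)) :=
    (isCompact_closedBall _ _).prod (isCompact_closedBall _ _)
  obtain ⟨p, hpK, φs, hφmono, hup⟩ :=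
    hK.tendsto_subseq (x := fun k => (x k, y k)) (fun k => Set.mk_mem_prod (hxball k) (hyball k))
  have hφtop : Tendsto φs atTop atTop := hφmono.tendsto_atTop
  have hxsub : Tendsto (fun j => x (φs j)) atTop (𝓝 p.1) := by
    have := (continuous_fst.tendsto p).comp hup
    simpa [Function.comp_def] using this
  have hysub : Tendsto (fun j => y (φs j)) atTop (𝓝 p.2) := by
    have := (continuous_snd.tendsto p).comp hup
    simpa [Function.comp_def] using this
  have hxsub1 : Tendsto (fun j => x (φs j + 1)) atTop (𝓝 p.1) :=
    tendsto_shift hxsub (hdx.comp hφtop)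
  have hysub1 : Tendsto (fun j => y (φs j + 1)) atTop (𝓝 p.2) :=
    tendsto_shift hysub (hdy.comp hφtop)
  have hytsub1 : Tendsto (fun j => yt (φs j + 1)) atTop (𝓝 p.2) :=
    tendsto_shift hysub1 (hdyt.comp hφtop)
  have hpX : p.1 ∈ X :=
    hXcl.mem_of_tendsto hxsub (Eventually.of_forall fun j => hxmemall _)
  have hpY : p.2 ∈ Y :=
    hYcl.mem_of_tendsto hysub (Eventually.of_forall fun j => hymemall _)
  -- the limit point is a saddle point
  have hsad1 : ∀ z ∈ X, f p.1 + ⟪A p.1, p.2⟫ ≤ f z + ⟪A z, p.2⟫ := by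
    intro z hz
    have hle : ∀ j, f (x (φs j + 1)) ≤ f z + ⟪A z, yt (φs j + 1)⟫
        - ⟪A (x (φs j + 1)), yt (φs j + 1)⟫
        + μ * (Breg ψ ψ' z (x (φs j)) - Breg ψ ψ' z (x (φs j + 1))) := by
      intro j
      have h := tpP (φs j) z hz
      have h0 := mul_nonneg hμ.le (hBψ0 (x (φs j + 1)) (x (φs j)))
      linarith
    have hR : Tendsto (fun j => f z + ⟪A z, yt (φs j + 1)⟫
        - ⟪A (x (φs j + 1)), yt (φs j + 1)⟫
        + μ * (Breg ψ ψ' z (x (φs j)) - Breg ψ ψ' z (x (φs j + 1)))) atTop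
        (𝓝 (f z + ⟪A z, p.2⟫ - ⟪A p.1, p.2⟫
          + μ * (Breg ψ ψ' z p.1 - Breg ψ ψ' z p.1))) := by
      have t1 : Tendsto (fun j => Breg ψ ψ' z (x (φs j))) atTop (𝓝 (Breg ψ ψ' z p.1)) :=
        ((hBψcont z).tendsto p.1).comp hxsub
      have t2 : Tendsto (fun j => Breg ψ ψ' z (x (φs j + 1))) atTop (𝓝 (Breg ψ ψ' z p.1)) :=
        ((hBψcont z).tendsto p.1).comp hxsub1
      have t3 : Tendsto (fun j => (⟪A z, yt (φs j + 1)⟫ : ℝ)) atTop (𝓝 ⟪A z, p.2⟫) :=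
        tendsto_const_nhds.inner hytsub1
      have t4 : Tendsto (fun j => (⟪A (x (φs j + 1)), yt (φs j + 1)⟫ : ℝ)) atTop
          (𝓝 ⟪A p.1, p.2⟫) :=
        ((A.continuous.tendsto p.1).comp hxsub1).inner hytsub1
      exact ((tendsto_const_nhds.add t3).sub t4).add ((t1.sub t2).const_mul μ)
    have := lsc_le_of_tendsto hflsc hxsub1 hR hle
    simp only [sub_self, mul_zero, add_zero] at this
    linarith
  have hsad2 : ∀ z ∈ Y, g p.2 + ⟪A p.1, z⟫ ≤ g z + ⟪A p.1, p.2⟫ := by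
    intro z hz
    have hle : ∀ j, g (y (φs j + 1)) ≤ g z - ⟪A (x (φs j + 1)), z⟫
        + ⟪A (x (φs j + 1)), y (φs j + 1)⟫
        + γ * (Breg φ φ' z (y (φs j)) - Breg φ φ' z (y (φs j + 1))) := by
      intro j
      have h := tpD2 (φs j) z hz
      have h0 := mul_nonneg hγ.le (hBφ0 (y (φs j + 1)) (y (φs j)))
      linarith
    have hR : Tendsto (fun j => g z - ⟪A (x (φs j + 1)), z⟫
        + ⟪A (x (φs j + 1)), y (φs j + 1)⟫
        + γ * (Breg φ φ' z (y (φs j)) - Breg φ φ' z (y (φs j + 1)))) atTop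
        (𝓝 (g z - ⟪A p.1, z⟫ + ⟪A p.1, p.2⟫
          + γ * (Breg φ φ' z p.2 - Breg φ φ' z p.2))) := by
      have t1 : Tendsto (fun j => Breg φ φ' z (y (φs j))) atTop (𝓝 (Breg φ φ' z p.2)) :=
        ((hBφcont z).tendsto p.2).comp hysub
      have t2 : Tendsto (fun j => Breg φ φ' z (y (φs j + 1))) atTop (𝓝 (Breg φ φ' z p.2)) :=
        ((hBφcont z).tendsto p.2).comp hysub1
      have t3 : Tendsto (fun j => (⟪A (x (φs j + 1)), z⟫ : ℝ)) atTop (𝓝 ⟪A p.1, z⟫) :=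
        (((A.continuous.tendsto p.1).comp hxsub1)).inner tendsto_const_nhds
      have t4 : Tendsto (fun j => (⟪A (x (φs j + 1)), y (φs j + 1)⟫ : ℝ)) atTop
          (𝓝 ⟪A p.1, p.2⟫) :=
        ((A.continuous.tendsto p.1).comp hxsub1).inner hysub1
      exact ((tendsto_const_nhds.sub t3).add t4).add ((t1.sub t2).const_mul γ)
    have := lsc_le_of_tendsto hglsc hysub1 hR hle
    simp only [sub_self, mul_zero, add_zero] at this
    linarith
  have hsadprop : ∀ xx ∈ X, ∀ yy ∈ Y,
      Lag f g A p.1 yy ≤ Lag f g A p.1 p.2 ∧ Lag f g A p.1 p.2 ≤ Lag f g A xx p.2 := by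
    intro xx hxx yy hyy
    constructor
    · simp only [Lag]
      linarith [hsad2 yy hyy]
    · simp only [Lag]
      linarith [hsad1 xx hxx]
  -- Fejér monotonicity with respect to the limit point
  set W : ℕ → ℝ := fun k => μ * Breg ψ ψ' p.1 (x k) + γ * Breg φ φ' p.2 (y k) with hWdef
  have hdesc2 := descent p.1 hpX p.2 hpY hsadprop
  have hWanti : Antitone W := by
    refine antitone_nat_of_succ_le fun k => ?_
    have h := hdesc2 k
    have e1 : 0 ≤ ε1 * ‖x (k+1) - x k‖ ^ 2 := mul_nonneg hε1.le (sq_nonneg _)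
    have e2 : 0 ≤ ε2 * ‖yt (k+1) - y (k+1)‖ ^ 2 := mul_nonneg hε2.le (sq_nonneg _)
    have e3 : 0 ≤ γ * Breg φ φ' (yt (k+1)) (y k) := mul_nonneg hγ.le (hBφ0 _ _)
    simp only [hWdef]
    linarith
  have hW0 : ∀ k, 0 ≤ W k := by
    intro k
    have := mul_nonneg hμ.le (hBψ0 p.1 (x k))
    have := mul_nonneg hγ.le (hBφ0 p.2 (y k))
    simp only [hWdef]
    linarith
  have hWsub : Tendsto (fun j => W (φs j)) atTop (𝓝 0) := by
    have t1 : Tendsto (fun j => Breg ψ ψ' p.1 (x (φs j))) atTop (𝓝 (Breg ψ ψ' p.1 p.1)) :=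
      ((hBψcont p.1).tendsto p.1).comp hxsub
    have t2 : Tendsto (fun j => Breg φ φ' p.2 (y (φs j))) atTop (𝓝 (Breg φ φ' p.2 p.2)) :=
      ((hBφcont p.2).tendsto p.2).comp hysub
    have h := (t1.const_mul μ).add (t2.const_mul γ)
    have hz : μ * Breg ψ ψ' p.1 p.1 + γ * Breg φ φ' p.2 p.2 = 0 := by
      simp [Breg]
    rw [hz] at h
    exact h.congr fun j => by simp only [hWdef]
  have hWtend : Tendsto W atTop (𝓝 0) := tendsto_of_antitone_subseq hWanti hW0 hφtop hWsub
  -- convergence of the full sequences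
  have hxfin : Tendsto x atTop (𝓝 p.1) := by
    have hg0 : Tendsto (fun k => 2 / (μ * σ) * W k) atTop (𝓝 0) := by
      have := hWtend.const_mul (2 / (μ * σ))
      simpa using this
    have hsq : Tendsto (fun k => ‖p.1 - x k‖ ^ 2) atTop (𝓝 0) := by
      refine squeeze_zero (fun k => sq_nonneg _) (fun k => ?_) hg0
      have h1 := hBψsc p.1 (x k)
      have h2 : μ * Breg ψ ψ' p.1 (x k) ≤ W k := by
        have := mul_nonneg hγ.le (hBφ0 p.2 (y k))
        simp only [hWdef]
        linarith
      rw [show 2 / (μ * σ) * W k = 2 * W k / (μ * σ) by ring,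
        le_div_iff₀ (by positivity)]
      nlinarith [mul_le_mul_of_nonneg_left h1 hμ.le]
    have hn := norm_tendsto_of_sq hsq
    rw [tendsto_iff_norm_sub_tendsto_zero]
    exact hn.congr fun k => norm_sub_rev p.1 (x k)
  have hyfin : Tendsto y atTop (𝓝 p.2) := by
    have hg0 : Tendsto (fun k => 2 / (γ * ϱ) * W k) atTop (𝓝 0) := by
      have := hWtend.const_mul (2 / (γ * ϱ))
      simpa using this
    have hsq : Tendsto (fun k => ‖p.2 - y k‖ ^ 2) atTop (𝓝 0) := by
      refine squeeze_zero (fun k => sq_nonneg _) (fun k => ?_) hg0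
      have h1 := hBφsc p.2 (y k)
      have h2 : γ * Breg φ φ' p.2 (y k) ≤ W k := by
        have := mul_nonneg hμ.le (hBψ0 p.1 (x k))
        simp only [hWdef]
        linarith
      rw [show 2 / (γ * ϱ) * W k = 2 * W k / (γ * ϱ) by ring,
        le_div_iff₀ (by positivity)]
      nlinarith [mul_le_mul_of_nonneg_left h1 hγ.le]
    have hn := norm_tendsto_of_sq hsq
    rw [tendsto_iff_norm_sub_tendsto_zero]
    exact hn.congr fun k => norm_sub_rev p.2 (y k)
  exact ⟨p.1, p.2, ⟨hpX, hpY, hsadprop⟩, hxfin, hyfin⟩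
end
end
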